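/- arXiv:2511.14944 — 4 statements merged into one kernel-verified Lean document; each statement's English description precedes it below -/
import Mathlib

section
/- Let G be a non-compact Polish group and let X be a minimal G-flow on which G acts freely (g·x = x implies g is the identity). Then every orbit G·x is a meager subset of X. -/
open Set Topology Filter

section CategoryTools
variable {X : Type*} [TopologicalSpace X]

lemma isMeagre_iUnion' {ι : Sort*} [Countable ι] {f : ι → Set X} (h : ∀ i, IsMeagre (f i)) :
    IsMeagre (⋃ i, f i) := by
  rw [IsMeagre, compl_iUnion]
  exact countable_iInter_mem.mpr h

lemma isMeagre_exists_seq {s : Set X} (h : IsMeagre s) :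
    ∃ f : ℕ → Set X, (∀ n, IsNowhereDense (f n)) ∧ s ⊆ ⋃ n, f n := by
  obtain ⟨S, hnwd, hScnt, hcov⟩ := isMeagre_iff_countable_union_isNowhereDense.1 h
  rcases S.eq_empty_or_nonempty with rfl | hne
  · exact ⟨fun _ => ∅, fun _ => isNowhereDense_empty, by simpa using hcov⟩
  · obtain ⟨f, rfl⟩ := hScnt.exists_eq_range hne
    exact ⟨f, fun n => hnwd _ ⟨n, rfl⟩, by rwa [sUnion_range] at hcov⟩

lemma isMeagre_of_covered (s : Set X) (f : ℕ → Set X) (h : ∀ n, IsNowhereDense (f n))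
    (hs : s ⊆ ⋃ n, f n) : IsMeagre s := by
  refine isMeagre_iff_countable_union_isNowhereDense.2 ⟨range f, ?_, countable_range f, ?_⟩
  · rintro t ⟨n, rfl⟩; exact h n
  · rwa [sUnion_range]

/-- If an open set is contained in the closure of `A`, it meets `A`. -/
lemma open_subset_closure_inter {A P : Set X} (hP : IsOpen P) (hPne : P.Nonempty)
    (h : P ⊆ closure A) : (P ∩ A).Nonempty := by
  obtain ⟨p, hp⟩ := hPne
  have := mem_closure_iff.1 (h hp) P hP hp
  exact this.imp fun q hq => ⟨hq.1, hq.2⟩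

/-- closure minus an open dense-in-it part is nowhere dense. -/
lemma isNowhereDense_closure_diff {A : Set X} (hA : IsOpen A) :
    IsNowhereDense (closure A \ A) := by
  have hcl : IsClosed (closure A \ A) := isClosed_closure.sdiff hA
  rw [hcl.isNowhereDense_iff]
  rw [eq_empty_iff_forall_notMem]
  intro z hz
  have hzo : z ∈ closure A \ A := interior_subset hz
  have : (interior (closure A \ A) ∩ A).Nonempty := by
    apply open_subset_closure_inter isOpen_interior ⟨z, hz⟩
    intro w hw
    exact (interior_subset hw).1
  obtain ⟨w, hw1, hw2⟩ := this
  exact (interior_subset hw1).2 hw2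

lemma IsNowhereDense.mono' {s t : Set X} (h : IsNowhereDense t) (hst : s ⊆ t) :
    IsNowhereDense s :=
  eq_empty_of_subset_empty (h ▸ interior_mono (closure_mono hst))

/-- **Banach category theorem**: if `S` is meagre in every member of an arbitrary family of
open sets, then `S` is meagre in the union. -/
theorem banach_category (S : Set X) (W : Set (Set X)) (hWo : ∀ w ∈ W, IsOpen w)
    (hm : ∀ w ∈ W, IsMeagre (S ∩ w)) : IsMeagre (S ∩ ⋃₀ W) := by
  classical
  -- the collection of candidate families
  let Good : Set (Set X) := {D | IsOpen D ∧ D.Nonempty ∧ ∃ w ∈ W, D ⊆ w}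
  -- maximal pairwise disjoint subfamily
  obtain ⟨𝒟, h𝒟good, h𝒟disj, h𝒟max⟩ :
      ∃ 𝒟 ⊆ {D | D ∈ Good}, (∀ A ∈ 𝒟, ∀ B ∈ 𝒟, A ≠ B → A ∩ B = ∅) ∧
        ∀ P ∈ Good, (∀ D ∈ 𝒟, P ∩ D = ∅) → P ∈ 𝒟 := by
    obtain ⟨𝒟, h1, h2⟩ := zorn_subset
      {𝒟 | 𝒟 ⊆ Good ∧ ∀ A ∈ 𝒟, ∀ B ∈ 𝒟, A ≠ B → A ∩ B = ∅} (by
        intro c hc hchain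
        refine ⟨⋃₀ c, ⟨?_, ?_⟩, fun s hs => subset_sUnion_of_mem hs⟩
        · intro D hD
          obtain ⟨t, htc, hDt⟩ := hD
          exact (hc htc).1 hDt
        · intro A hA B hB hAB
          obtain ⟨tA, htA, hAtA⟩ := hA
          obtain ⟨tB, htB, hBtB⟩ := hB
          rcases hchain.total htA htB with h | h
          · exact (hc htB).2 A (h hAtA) B hBtB hAB
          · exact (hc htA).2 A hAtA B (h hBtB) hAB)
    refine ⟨𝒟, h1.1, h1.2, ?_⟩
    intro P hP hPdisj
    by_contra hPn
    have : 𝒟 ∪ {P} ∈ {𝒟 | 𝒟 ⊆ Good ∧ ∀ A ∈ 𝒟, ∀ B ∈ 𝒟, A ≠ B → A ∩ B = ∅} := by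
      constructor
      · intro D hD
        rcases hD with hD | hD
        · exact h1.1 hD
        · rw [mem_singleton_iff] at hD; subst hD; exact hP
      · intro A hA B hB hAB
        rcases hA with hA | hA <;> rcases hB with hB | hB
        · exact h1.2 A hA B hB hAB
        · rw [mem_singleton_iff] at hB; subst hB
          rw [inter_comm]; exact hPdisj A hA
        · rw [mem_singleton_iff] at hA; subst hA
          exact hPdisj B hB
        · rw [mem_singleton_iff] at hA hB; subst hA; subst hB; exact absurd rfl hAB
    have h3 := h2 this (subset_union_left)
    exact hPn (h3 (mem_union_right 𝒟 rfl))
  -- meagre witnesses on each member of 𝒟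
  have hDm : ∀ D ∈ 𝒟, IsMeagre (S ∩ D) := fun D hD => by
    obtain ⟨-, -, w, hw, hDw⟩ := h𝒟good hD
    exact (hm w hw).mono (inter_subset_inter_right S hDw)
  choose! f hf1 hf2 using fun D (hD : D ∈ 𝒟) => isMeagre_exists_seq (hDm D hD)
  set M : ℕ → Set X := fun n => ⋃ D ∈ 𝒟, (f D n ∩ D) with hM
  have hMnwd : ∀ n, IsNowhereDense (M n) := by
    intro n
    rw [IsNowhereDense, eq_empty_iff_forall_notMem]
    intro z hz
    set Q := interior (closure (M n)) with hQ
    have hQo : IsOpen Q := isOpen_interior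
    have hQsub : Q ⊆ closure (M n) := interior_subset
    have : (Q ∩ M n).Nonempty := open_subset_closure_inter hQo ⟨z, hz⟩ hQsub
    obtain ⟨q, hqQ, hqM⟩ := this
    simp only [hM, mem_iUnion] at hqM
    obtain ⟨D₀, hD₀, hq0⟩ := hqM
    have hD₀o : IsOpen D₀ := (h𝒟good hD₀).1
    have key : Q ∩ D₀ ⊆ closure (f D₀ n ∩ D₀) := by
      intro y hy
      rw [mem_closure_iff]
      intro o ho hyo
      have h1 : IsOpen (o ∩ Q ∩ D₀) := (ho.inter hQo).inter hD₀o
      have h2 : y ∈ o ∩ Q ∩ D₀ := ⟨⟨hyo, hy.1⟩, hy.2⟩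
      have h3 : ((o ∩ Q ∩ D₀) ∩ M n).Nonempty :=
        open_subset_closure_inter h1 ⟨y, h2⟩ (fun w hw => hQsub hw.1.2)
      obtain ⟨w, hw1, hw2⟩ := h3
      simp only [hM, mem_iUnion] at hw2
      obtain ⟨D₁, hD₁, hwD₁⟩ := hw2
      have hD10 : D₁ = D₀ := by
        by_contra hne
        have hdisj := h𝒟disj D₁ hD₁ D₀ hD₀ hne
        have : w ∈ D₁ ∩ D₀ := ⟨hwD₁.2, hw1.2⟩
        rw [hdisj] at this
        exact this
      subst hD10
      exact ⟨w, hw1.1.1, hwD₁⟩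
    have hQD₀ : (Q ∩ D₀).Nonempty := ⟨q, hqQ, hq0.2⟩
    have hsub2 : Q ∩ D₀ ⊆ interior (closure (f D₀ n ∩ D₀)) :=
      interior_maximal key (hQo.inter hD₀o)
    have hnwd : IsNowhereDense (f D₀ n ∩ D₀) :=
      (hf1 D₀ hD₀ n).mono' inter_subset_left
    rw [IsNowhereDense] at hnwd
    rw [hnwd] at hsub2
    exact hQD₀.elim fun y hy => hsub2 hy
  -- density of ⋃₀ 𝒟 in ⋃₀ W
  have hdense : ⋃₀ W ⊆ closure (⋃₀ 𝒟) := by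
    intro z hz
    by_contra hzc
    obtain ⟨w, hwW, hzw⟩ := hz
    set P := w ∩ (closure (⋃₀ 𝒟))ᶜ with hP
    have hPo : IsOpen P := (hWo w hwW).inter isClosed_closure.isOpen_compl
    have hPne : P.Nonempty := ⟨z, hzw, hzc⟩
    have hPGood : P ∈ Good := ⟨hPo, hPne, w, hwW, inter_subset_left⟩
    have hPdisj : ∀ D ∈ 𝒟, P ∩ D = ∅ := by
      intro D hD
      rw [eq_empty_iff_forall_notMem]
      rintro y ⟨hyP, hyD⟩
      exact hyP.2 (subset_closure ⟨D, hD, hyD⟩)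
    have hPin := h𝒟max P hPGood hPdisj
    have := hPdisj P hPin
    rw [inter_self] at this
    rw [this] at hPne
    exact hPne.elim fun y hy => hy
  -- the boundary is nowhere dense
  have h𝒟open : IsOpen (⋃₀ 𝒟) := isOpen_sUnion fun D hD => (h𝒟good hD).1
  have hbd : IsNowhereDense (closure (⋃₀ 𝒟) \ ⋃₀ 𝒟) := isNowhereDense_closure_diff h𝒟open
  -- final covering
  apply isMeagre_of_covered _ (fun n => Nat.casesOn n (closure (⋃₀ 𝒟) \ ⋃₀ 𝒟) M)
  · intro n
    cases n with
    | zero => exact hbd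
    | succ k => exact hMnwd k
  · rintro z ⟨hzS, hzW⟩
    by_cases hz𝒟 : z ∈ ⋃₀ 𝒟
    · obtain ⟨D, hD, hzD⟩ := hz𝒟
      have := hf2 D hD ⟨hzS, hzD⟩
      rw [mem_iUnion] at this
      obtain ⟨n, hn⟩ := this
      exact mem_iUnion.2 ⟨n + 1, mem_iUnion₂.2 ⟨D, hD, hn, hzD⟩⟩
    · exact mem_iUnion.2 ⟨0, hdense hzW, hz𝒟⟩

end CategoryTools
section HullTools
variable {X : Type*} [TopologicalSpace X]

lemma IsMeagre.union' {s t : Set X} (hs : IsMeagre s) (ht : IsMeagre t) :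
    IsMeagre (s ∪ t) := by
  rw [IsMeagre, compl_union]
  exact Filter.inter_mem hs ht

lemma residualEq_of_isMeagre_diffs {s u : Set X} (h1 : IsMeagre (s \ u))
    (h2 : IsMeagre (u \ s)) : s =ᵇ u := by
  have : ((s \ u) ∪ (u \ s))ᶜ ∈ residual X := h1.union' h2
  refine Filter.mem_of_superset this ?_
  intro y hy
  simp only [mem_compl_iff, mem_union, not_or, mem_diff, not_and, not_not] at hy
  show (y ∈ s) = (y ∈ u)
  exact propext ⟨fun hys => hy.1 hys, fun hyu => hy.2 hyu⟩

end HullTools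

section HullTools
variable {X : Type*} [TopologicalSpace X]

/-- The largest open set in which `B` is meagre. -/
def catKernel (B : Set X) : Set X := ⋃₀ {W | IsOpen W ∧ IsMeagre (B ∩ W)}

lemma isOpen_catKernel (B : Set X) : IsOpen (catKernel B) :=
  isOpen_sUnion fun _ hW => hW.1

lemma isMeagre_inter_catKernel (B : Set X) : IsMeagre (B ∩ catKernel B) :=
  banach_category B _ (fun _ hW => hW.1) (fun _ hW => hW.2)

lemma subset_catKernel {B W : Set X} (hW : IsOpen W) (h : IsMeagre (B ∩ W)) :
    W ⊆ catKernel B :=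
  subset_sUnion_of_mem ⟨hW, h⟩

/-- The Baire-measurable hull of a set. -/
def catHull (B : Set X) : Set X := (catKernel B)ᶜ

lemma baireMeasurableSet_catHull (B : Set X) : BaireMeasurableSet (catHull B) :=
  (isOpen_catKernel B).baireMeasurableSet.compl

lemma isMeagre_diff_catHull (B : Set X) : IsMeagre (B \ catHull B) := by
  have : B \ catHull B = B ∩ catKernel B := by
    rw [catHull, diff_compl]
  rw [this]
  exact isMeagre_inter_catKernel B

/-- Eventual equality mod residual gives meagre differences. -/
lemma isMeagre_diff_of_residualEq {s u : Set X} (h : s =ᵇ u) :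
    IsMeagre (s \ u) ∧ IsMeagre (u \ s) := by
  have hE : {y | (y ∈ s) = (y ∈ u)} ∈ residual X := h
  constructor
  · refine Filter.mem_of_superset hE ?_
    intro y hy
    simp only [mem_setOf_eq, eq_iff_iff] at hy
    show y ∉ s \ u
    rintro ⟨hys, hyu⟩
    exact hyu (hy.1 hys)
  · refine Filter.mem_of_superset hE ?_
    intro y hy
    simp only [mem_setOf_eq, eq_iff_iff] at hy
    show y ∉ u \ s
    rintro ⟨hyu, hys⟩
    exact hys (hy.2 hyu)

variable [BaireSpace X]

lemma IsOpen.not_isMeagre {W : Set X} (hW : IsOpen W) (hne : W.Nonempty) :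
    ¬ IsMeagre W := by
  intro h
  have : Dense (Wᶜ) := dense_of_mem_residual h
  have : Wᶜ = univ := IsClosed.closure_eq (isClosed_compl_iff.2 hW) ▸ this.closure_eq
  obtain ⟨y, hy⟩ := hne
  exact (this ▸ (mem_univ y) : y ∈ Wᶜ) hy

omit [BaireSpace X] in
/-- A nonmeagre Baire measurable set is comeagre in some nonempty open set. -/
lemma exists_isOpen_isMeagre_diff {s : Set X} (hs : BaireMeasurableSet s)
    (h : ¬ IsMeagre s) : ∃ W : Set X, IsOpen W ∧ W.Nonempty ∧ IsMeagre (W \ s) := by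
  obtain ⟨u, huo, hsu⟩ := hs.residualEq_isOpen
  obtain ⟨h1, h2⟩ := isMeagre_diff_of_residualEq hsu
  rcases u.eq_empty_or_nonempty with rfl | hne
  · exact absurd (by simpa using h1 : IsMeagre s) h
  · exact ⟨u, huo, hne, h2⟩

/-- Minimality of the hull: if `B ⊆ C` with `C` Baire measurable, then the hull of `B`
is almost contained in `C`. -/
lemma catHull_minimal {B C : Set X} (hBC : B ⊆ C) (hC : BaireMeasurableSet C) :
    IsMeagre (catHull B \ C) := by
  by_contra hnm
  have hbm : BaireMeasurableSet (catHull B \ C) := (baireMeasurableSet_catHull B).diff hC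
  obtain ⟨W, hWo, hWne, hWm⟩ := exists_isOpen_isMeagre_diff hbm hnm
  -- B ∩ W is meagre
  have hBW : IsMeagre (B ∩ W) := by
    apply hWm.mono
    intro y ⟨hyB, hyW⟩
    refine ⟨hyW, fun hyd => hyd.2 (hBC hyB)⟩
  have hWker : W ⊆ catKernel B := subset_catKernel hWo hBW
  -- so W is disjoint from the hull, and hence W is meagre
  have : W ⊆ W \ (catHull B \ C) := by
    intro y hyW
    exact ⟨hyW, fun hyd => hyd.1 (hWker hyW)⟩
  exact hWo.not_isMeagre hWne (hWm.mono this)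

end HullTools
section Suslin

variable {X : Type*} [TopologicalSpace X]

/-- The cylinder in `ℕ → ℕ` determined by a finite list. -/
def cylL (s : List ℕ) : Set (ℕ → ℕ) := {β | ∀ i, i < s.length → β i = s.getD i 0}

lemma cylL_nil : cylL ([] : List ℕ) = univ := by
  ext β; simp [cylL]

lemma getD_append_lt (l l' : List ℕ) (n d : ℕ) (h : n < l.length) :
    (l ++ l').getD n d = l.getD n d := by
  rw [List.getD_eq_getElem _ _ (by simp; omega), List.getD_eq_getElem _ _ h]
  exact List.getElem_append_left h

lemma getD_concat_self (l : List ℕ) (j d : ℕ) : (l ++ [j]).getD l.length d = j := by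
  rw [List.getD_eq_getElem _ _ (by simp)]
  simp

lemma getD_take_lt (l : List ℕ) (n i d : ℕ) (h : i < n) :
    (l.take n).getD i d = l.getD i d := by
  rcases Nat.lt_or_ge i l.length with h' | h'
  · rw [List.getD_eq_getElem _ _ (by simp; omega), List.getD_eq_getElem _ _ h']
    simp [List.getElem_take]
  · rw [List.getD_eq_default _ _ (by simp; omega), List.getD_eq_default _ _ (by omega)]

lemma mem_cylL_concat {s : List ℕ} {i : ℕ} {β : ℕ → ℕ} :
    β ∈ cylL (s ++ [i]) ↔ β ∈ cylL s ∧ β s.length = i := by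
  constructor
  · intro h
    refine ⟨fun j hj => ?_, ?_⟩
    · rw [← getD_append_lt s [i] j 0 hj]
      exact h j (by simp; omega)
    · rw [← getD_concat_self s i 0]
      exact h s.length (by simp)
  · rintro ⟨h1, h2⟩ j hj
    simp only [List.length_append, List.length_singleton] at hj
    rcases Nat.lt_or_ge j s.length with hj' | hj'
    · rw [getD_append_lt s [i] j 0 hj']
      exact h1 j hj'
    · have : j = s.length := by omega
      subst this
      rw [getD_concat_self s i 0]
      exact h2

lemma cylL_eq_iUnion_concat (s : List ℕ) : cylL s = ⋃ i, cylL (s ++ [i]) := by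
  ext β
  simp only [mem_iUnion, mem_cylL_concat]
  constructor
  · intro h; exact ⟨β s.length, h, rfl⟩
  · rintro ⟨i, h, -⟩; exact h

/-- The key representation lemma: a point in all the closures `closure (ψ '' cylinder α n)`
is in the range of a continuous `ψ` (with value `ψ α`), provided `X` is Hausdorff. -/
theorem eq_of_mem_closure_cylinder [T2Space X] {ψ : (ℕ → ℕ) → X} (hψ : Continuous ψ)
    (α : ℕ → ℕ) (z : X) (hz : ∀ n, z ∈ closure (ψ '' PiNat.cylinder α n)) : z = ψ α := by
  set l : Filter (ℕ → ℕ) := 𝓝 α ⊓ Filter.comap ψ (𝓝 z) with hl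
  have hbasis := (PiNat.isTopologicalBasis_cylinders (fun _ : ℕ => ℕ)).nhds_hasBasis (a := α)
  have hbasis2 := ((𝓝 z).basis_sets.comap ψ)
  have hne : l.NeBot := by
    rw [hl, hbasis.inf_basis_neBot_iff hbasis2]
    rintro t ⟨⟨y, n, rfl⟩, hαt⟩ S hS
    have hcyl : PiNat.cylinder y n = PiNat.cylinder α n :=
      (PiNat.mem_cylinder_iff_eq.1 hαt).symm
    obtain ⟨w, hwS, β, hβcyl, hβw⟩ := mem_closure_iff_nhds.1 (hz n) S hS
    rw [hcyl]
    exact ⟨β, hβcyl, by rw [mem_preimage, hβw]; exact hwS⟩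
  have h1 : Filter.Tendsto ψ l (𝓝 (ψ α)) := (hψ.tendsto α).mono_left inf_le_left
  have h2 : Filter.Tendsto ψ l (𝓝 z) := Filter.tendsto_comap.mono_left inf_le_right
  exact tendsto_nhds_unique h2 h1

/-- **Analytic sets have the Baire property** (in a Hausdorff Baire space):
the range of a continuous map from Baire space `ℕ → ℕ` is Baire measurable. -/
theorem baireMeasurableSet_range_of_continuous [T2Space X] [BaireSpace X]
    {ψ : (ℕ → ℕ) → X} (hψ : Continuous ψ) : BaireMeasurableSet (range ψ) := by
  classical
  -- the Suslin scheme
  set B : List ℕ → Set X := fun s => ψ '' cylL s with hB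
  set P : List ℕ → Set X := fun s => closure (B s) with hP
  set HH : List ℕ → Set X := fun s =>
    ⋂ k ∈ Finset.range (s.length + 1), (catHull (B (s.take k)) ∩ P (s.take k)) with hHH
  have hBP_HH : ∀ s, BaireMeasurableSet (HH s) := by
    intro s
    apply BaireMeasurableSet.biInter (Finset.range (s.length + 1)).countable_toSet
    intro k _
    exact (baireMeasurableSet_catHull _).inter isClosed_closure.isOpen_compl.baireMeasurableSet.of_compl
  have hHH_subset : ∀ s k, k ≤ s.length → HH s ⊆ catHull (B (s.take k)) ∩ P (s.take k) := by
    intro s k hk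
    intro z hz
    exact mem_iInter₂.1 hz k (Finset.mem_range.2 (by omega))
  have hHH_self : ∀ s, HH s ⊆ catHull (B s) ∩ P s := by
    intro s
    have := hHH_subset s s.length le_rfl
    rwa [List.take_length] at this
  have hHH_concat : ∀ s i, HH (s ++ [i]) = HH s ∩ (catHull (B (s ++ [i])) ∩ P (s ++ [i])) := by
    intro s i
    rw [hHH]
    have hlen : (s ++ [i]).length = s.length + 1 := by simp
    ext z
    simp only [mem_iInter, mem_inter_iff, Finset.mem_range, mem_iInter₂, Finset.mem_coe]
    constructor
    · intro h
      refine ⟨fun k hk => ?_, ?_⟩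
      · have := h k (by omega)
        rwa [List.take_append_of_le_length (by omega)] at this
      · have h2 := h (s.length + 1) (by omega)
        have h3 : List.take (s.length + 1) (s ++ [i]) = s ++ [i] := by
          rw [← hlen]; exact List.take_length
        rwa [h3] at h2
    · rintro ⟨h1, h2⟩ k hk
      rcases Nat.lt_or_ge k (s.length + 1) with hk' | hk'
      · rw [List.take_append_of_le_length (by omega)]
        exact h1 k hk'
      · have hk2 : k = s.length + 1 := by omega
        subst hk2
        have h3 : List.take (s.length + 1) (s ++ [i]) = s ++ [i] := by
          rw [← hlen]; exact List.take_length
        rwa [h3]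
  -- the exceptional meagre sets
  have hm2 : ∀ s : List ℕ, IsMeagre (HH s \ ⋃ i, HH (s ++ [i])) := by
    intro s
    set C : Set X := ⋃ i, (catHull (B (s ++ [i])) ∩ P (s ++ [i])) with hC
    set M : Set X := ⋃ i, (B (s ++ [i]) \ catHull (B (s ++ [i]))) with hMM
    have hMm : IsMeagre M := isMeagre_iUnion' fun i => isMeagre_diff_catHull _
    have hCbp : BaireMeasurableSet C :=
      BaireMeasurableSet.iUnion fun i => (baireMeasurableSet_catHull _).inter
        isClosed_closure.isOpen_compl.baireMeasurableSet.of_compl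
    have hBsub : B s ⊆ C ∪ M := by
      rintro z ⟨β, hβ, rfl⟩
      have hβ' : β ∈ cylL (s ++ [β s.length]) := mem_cylL_concat.2 ⟨hβ, rfl⟩
      set i := β s.length
      by_cases hz : ψ β ∈ catHull (B (s ++ [i]))
      · exact Or.inl (mem_iUnion.2 ⟨i, hz, subset_closure ⟨β, hβ', rfl⟩⟩)
      · exact Or.inr (mem_iUnion.2 ⟨i, ⟨β, hβ', rfl⟩, hz⟩)
    have hmin : IsMeagre (catHull (B s) \ (C ∪ M)) :=
      catHull_minimal hBsub (hCbp.union hMm.baireMeasurableSet)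
    apply (hmin.union' hMm).mono
    intro z ⟨hz1, hz2⟩
    have hzH : z ∈ catHull (B s) := (hHH_self s hz1).1
    have hzC : z ∉ C := by
      intro hzC
      obtain ⟨i, hzi⟩ := mem_iUnion.1 hzC
      exact hz2 (mem_iUnion.2 ⟨i, (hHH_concat s i).symm ▸ ⟨hz1, hzi⟩⟩)
    by_cases hzM : z ∈ M
    · exact Or.inr hzM
    · exact Or.inl ⟨hzH, fun h => h.elim hzC hzM⟩
  -- the global exceptional set
  set E : Set X := (⋃ s : List ℕ, (HH s \ ⋃ i, HH (s ++ [i]))) ∪ (B [] \ catHull (B [])) with hE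
  have hEm : IsMeagre E := (isMeagre_iUnion' hm2).union' (isMeagre_diff_catHull _)
  -- range ψ and HH [] differ within E
  have hrange : range ψ = B [] := by
    show range ψ = ψ '' cylL []
    rw [cylL_nil, image_univ]
  have hHHnil : HH [] = catHull (B []) ∩ P [] := by
    have := hHH_self []
    rw [hHH]
    ext z
    simp only [List.length_nil, Nat.zero_add, Finset.range_one, Finset.mem_singleton,
      mem_iInter, mem_inter_iff]
    constructor
    · intro h; exact h 0 rfl
    · intro h k hk; subst hk; simpa using h
  have hsub1 : range ψ \ HH [] ⊆ E := by
    intro z hz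
    obtain ⟨hz1, hz2⟩ := hz
    rw [hrange] at hz1
    rw [hHHnil] at hz2
    have hzP : z ∈ P [] := subset_closure hz1
    have : z ∉ catHull (B []) := fun h => hz2 ⟨h, hzP⟩
    exact Or.inr ⟨hz1, this⟩
  have hsub2 : HH [] \ range ψ ⊆ E := by
    intro z hz
    obtain ⟨hz1, hz2⟩ := hz
    by_contra hzE
    rw [hE] at hzE
    simp only [mem_union, not_or] at hzE
    have hstep : ∀ s : List ℕ, z ∈ HH s → ∃ i, z ∈ HH (s ++ [i]) := by
      intro s hs
      by_contra hno
      push_neg at hno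
      exact hzE.1 (mem_iUnion.2 ⟨s, hs, fun h => by
        obtain ⟨i, hi⟩ := mem_iUnion.1 h
        exact hno i hi⟩)
    -- build the branch
    let step : {s : List ℕ // z ∈ HH s} → {s : List ℕ // z ∈ HH s} := fun t =>
      ⟨t.1 ++ [Classical.choose (hstep t.1 t.2)], Classical.choose_spec (hstep t.1 t.2)⟩
    let g : ℕ → {s : List ℕ // z ∈ HH s} := fun n => step^[n] ⟨[], hz1⟩
    have hg_succ : ∀ n, g (n + 1) = step (g n) := fun n => Function.iterate_succ_apply' step n _
    have hg_concat : ∀ n, ∃ i, (g (n+1)).1 = (g n).1 ++ [i] := by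
      intro n
      rw [hg_succ n]
      exact ⟨_, rfl⟩
    have hglen : ∀ n, (g n).1.length = n := by
      intro n
      induction n with
      | zero => rfl
      | succ k ih =>
        obtain ⟨i, hi⟩ := hg_concat k
        rw [hi]
        simp [ih]
    have hgtake : ∀ m n, m ≤ n → (g n).1.take m = (g m).1 := by
      intro m n hmn
      induction n with
      | zero =>
        have : m = 0 := by omega
        subst this
        rfl
      | succ k ih =>
        rcases Nat.lt_or_ge m (k+1) with h | h
        · obtain ⟨i, hi⟩ := hg_concat k
          rw [hi, List.take_append_of_le_length (by rw [hglen]; omega)]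
          exact ih (by omega)
        · have hm : m = k + 1 := by omega
          subst hm
          have h4 := List.take_length (l := (g (k+1)).1)
          rwa [hglen (k+1)] at h4
    set α : ℕ → ℕ := fun n => (g (n+1)).1.getD n 0 with hα
    have hcylsub : ∀ n, cylL (g n).1 ⊆ PiNat.cylinder α n := by
      intro n β hβ
      intro i hi
      have h1 : β i = (g n).1.getD i 0 := hβ i (by rw [hglen]; omega)
      have h2 : (g n).1.getD i 0 = α i := by
        show (g n).1.getD i 0 = (g (i+1)).1.getD i 0
        have h3 : (g n).1.take (i+1) = (g (i+1)).1 := hgtake (i+1) n (by omega)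
        rw [← h3, getD_take_lt _ _ _ _ (by omega)]
      rw [h1, h2]
    have hcl : ∀ n, z ∈ closure (ψ '' PiNat.cylinder α n) := by
      intro n
      have := (hHH_self (g n).1 (g n).2).2
      exact closure_mono (image_mono (f := ψ) (hcylsub n)) this
    exact hz2 ⟨α, (eq_of_mem_closure_cylinder hψ α z hcl).symm⟩
  exact (hBP_HH []).congr (residualEq_of_isMeagre_diffs (hEm.mono hsub2) (hEm.mono hsub1))

end Suslin
section MainHelpers

lemma Homeomorph.isMeagre_image' {α β : Type*} [TopologicalSpace α] [TopologicalSpace β]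
    (h : α ≃ₜ β) {s : Set α} : IsMeagre (h '' s) ↔ IsMeagre s := by
  rw [IsMeagre, IsMeagre, ← h.residual_map_eq, Filter.mem_map]
  have : ⇑h ⁻¹' ((⇑h '' s)ᶜ) = sᶜ := by rw [preimage_compl, h.preimage_image]
  rw [this]

lemma analyticSet_baireMeasurableSet {X : Type*} [TopologicalSpace X] [T2Space X] [BaireSpace X]
    {s : Set X} (hs : MeasureTheory.AnalyticSet s) : BaireMeasurableSet s := by
  rw [MeasureTheory.AnalyticSet_def] at hs
  rcases hs with rfl | ⟨ψ, hψ, rfl⟩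
  · exact IsMeagre.empty.baireMeasurableSet
  · exact baireMeasurableSet_range_of_continuous hψ

lemma exists_nhds_inv_mul {G : Type*} [Group G] [TopologicalSpace G] [IsTopologicalGroup G]
    {U : Set G} (hU : U ∈ 𝓝 (1 : G)) :
    ∃ V : Set G, IsOpen V ∧ (1 : G) ∈ V ∧ ∀ a ∈ V, ∀ b ∈ V, a⁻¹ * b ∈ U := by
  have hc : Continuous fun p : G × G => p.1⁻¹ * p.2 := (continuous_fst.inv).mul continuous_snd
  have h1 : (fun p : G × G => p.1⁻¹ * p.2) ((1 : G), (1 : G)) = 1 := by simp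
  have hpre : (fun p : G × G => p.1⁻¹ * p.2) ⁻¹' U ∈ 𝓝 (((1 : G), (1 : G)) : G × G) :=
    hc.tendsto ((1 : G), (1 : G)) (by simpa using hU)
  rw [mem_nhds_prod_iff] at hpre
  obtain ⟨u, hu, v, hv, huv⟩ := hpre
  obtain ⟨u', hu'sub, hu'o, hu'1⟩ := mem_nhds_iff.1 hu
  obtain ⟨v', hv'sub, hv'o, hv'1⟩ := mem_nhds_iff.1 hv
  refine ⟨u' ∩ v', hu'o.inter hv'o, ⟨hu'1, hv'1⟩, ?_⟩
  intro a ha b hb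
  exact huv (Set.mk_mem_prod (hu'sub ha.1) (hv'sub hb.2))

end MainHelpers
universe u v w x

/-- A `G`-flow: a nonempty compact Hausdorff space equipped with a continuous
action of the topological group `G` by homeomorphisms. -/
structure GFlow (G : Type u) [Group G] [TopologicalSpace G] [IsTopologicalGroup G] where
  /-- the underlying phase space -/
  X : Type v
  [instTopologicalSpace : TopologicalSpace X]
  [instCompactSpace : CompactSpace X]
  [instT2Space : T2Space X]
  [instNonempty : Nonempty X]
  [instMulAction : MulAction G X]
  [instContinuousSMul : ContinuousSMul G X]

attribute [instance] GFlow.instTopologicalSpace GFlow.instCompactSpace GFlow.instT2Space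
  GFlow.instNonempty GFlow.instMulAction GFlow.instContinuousSMul

variable {G : Type u} [Group G] [TopologicalSpace G] [IsTopologicalGroup G]

/-- A `G`-map between `G`-flows: a continuous `G`-equivariant map. -/
def IsGMap (F₁ : GFlow.{u, v} G) (F₂ : GFlow.{u, w} G) (f : F₁.X → F₂.X) : Prop :=
  Continuous f ∧ ∀ (g : G) (x : F₁.X), f (g • x) = g • f x

/-- An extension of `G`-flows: a surjective `G`-map. -/
def IsExtension (F₁ : GFlow.{u, v} G) (F₂ : GFlow.{u, w} G) (f : F₁.X → F₂.X) : Prop :=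
  IsGMap F₁ F₂ f ∧ Function.Surjective f

/-- A subflow: a nonempty closed `G`-invariant subset. -/
def IsSubflow (F : GFlow.{u, v} G) (C : Set F.X) : Prop :=
  C.Nonempty ∧ IsClosed C ∧ ∀ g : G, ∀ x ∈ C, g • x ∈ C

/-- A `G`-flow is minimal if it has no proper subflows. -/
def GFlow.IsMinimal (F : GFlow.{u, v} G) : Prop :=
  ∀ C : Set F.X, IsSubflow F C → C = Set.univ

/-- A `G`-flow `F` is `G`-projective if for all `G`-flows `Y`, `Z`, every `G`-map
`φ : F → Y` and every extension `π : Z → Y`, there is a `G`-map `ψ : F → Z`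
with `π ∘ ψ = φ`. -/
def IsGProjective (F : GFlow.{u, v} G) : Prop :=
  ∀ (Y : GFlow.{u, w} G) (Z : GFlow.{u, x} G) (φ : F.X → Y.X) (π : Z.X → Y.X),
    IsGMap F Y φ → IsExtension Z Y π →
    ∃ ψ : F.X → Z.X, IsGMap F Z ψ ∧ π ∘ ψ = φ

/-- If `G` is a non-compact Polish group and `X` is a minimal `G`-flow on
which `G` acts freely, then every orbit is meager. -/
theorem statement4 {G : Type u} [Group G] [TopologicalSpace G] [IsTopologicalGroup G]
    [PolishSpace G] (hG : ¬ CompactSpace G)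
    (F : GFlow.{u, v} G) (hmin : F.IsMinimal)
    (hfree : ∀ (g : G) (x : F.X), g • x = x → g = 1)
    (x : F.X) : IsMeagre (MulAction.orbit G x : Set F.X) := by
  by_contra hNM
  obtain ⟨D, hDcnt, hDdense⟩ := TopologicalSpace.exists_countable_dense G
  set φ : G → F.X := fun g => g • x with hφdef
  have hφc : Continuous φ := continuous_id.smul continuous_const
  have horb : MulAction.orbit G x = range φ := rfl
  -- injectivity of the orbit map, from freeness
  have hinj : ∀ a b : G, a • x = b • x → a = b := by
    intro a b hab
    have h1 : (b⁻¹ * a) • x = x := by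
      rw [mul_smul, hab, inv_smul_smul]
    have := hfree (b⁻¹ * a) x h1
    have h2 : b * (b⁻¹ * a) = b * 1 := by rw [this]
    rwa [mul_inv_cancel_left, mul_one] at h2
  -- covering the group by countably many translates of any nonempty open set
  have hcover : ∀ V : Set G, IsOpen V → V.Nonempty → ∀ g : G, ∃ d ∈ D, d⁻¹ * g ∈ V := by
    rintro V hV ⟨v0, hv0⟩ g
    have hT : IsOpen ((fun d : G => d⁻¹ * g) ⁻¹' V) :=
      hV.preimage (continuous_inv.mul continuous_const)
    have hTne : ((fun d : G => d⁻¹ * g) ⁻¹' V).Nonempty := by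
      refine ⟨g * v0⁻¹, ?_⟩
      show (g * v0⁻¹)⁻¹ * g ∈ V
      rw [mul_inv_rev, inv_inv, mul_assoc, inv_mul_cancel, mul_one]
      exact hv0
    obtain ⟨d, hdD, hdT⟩ := hDdense.exists_mem_open hT hTne
    exact ⟨d, hdD, hdT⟩
  -- every nonempty open set has nonmeagre image
  have hVnm : ∀ V : Set G, IsOpen V → V.Nonempty → ¬ IsMeagre (φ '' V) := by
    intro V hV hVne hm
    apply hNM
    have hsub : MulAction.orbit G x ⊆ ⋃ d ∈ D, (fun z => d • z) '' (φ '' V) := by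
      rintro y ⟨g, rfl⟩
      obtain ⟨d, hdD, hdV⟩ := hcover V hV hVne g
      refine mem_biUnion hdD ⟨φ (d⁻¹ * g), ⟨d⁻¹ * g, hdV, rfl⟩, ?_⟩
      show d • ((d⁻¹ * g) • x) = g • x
      rw [smul_smul, mul_inv_cancel_left]
    refine IsMeagre.mono hsub ?_
    haveI := hDcnt.to_subtype
    rw [biUnion_eq_iUnion]
    exact isMeagre_iUnion' fun d =>
      ((Homeomorph.smul ((d : G))).isMeagre_image' (s := φ '' V)).2 hm
  -- images of open sets are Baire measurable
  have hBPimg : ∀ V : Set G, IsOpen V → BaireMeasurableSet (φ '' V) := fun V hV =>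
    analyticSet_baireMeasurableSet (hV.analyticSet_image hφc)
  -- Effros property at the base point
  have hEffA : ∀ U ∈ 𝓝 (1 : G), ∃ O : Set F.X, IsOpen O ∧ x ∈ O ∧ IsMeagre (O \ φ '' U) := by
    intro U hU
    obtain ⟨V, hVo, hV1, hVmul⟩ := exists_nhds_inv_mul hU
    obtain ⟨W, hWo, hWne, hWm⟩ := exists_isOpen_isMeagre_diff (hBPimg V hVo)
      (hVnm V hVo ⟨1, hV1⟩)
    have hWV : (W ∩ φ '' V).Nonempty := by
      by_contra hc
      rw [not_nonempty_iff_eq_empty] at hc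
      apply hWo.not_isMeagre hWne
      apply hWm.mono
      intro z hz
      refine ⟨hz, fun hzv => ?_⟩
      rw [eq_empty_iff_forall_notMem] at hc
      exact hc z ⟨hz, hzv⟩
    obtain ⟨z0, hz0W, v, hvV, hvz⟩ := hWV
    refine ⟨(fun z => v⁻¹ • z) '' W, (Homeomorph.smul (v⁻¹ : G)).isOpenMap W hWo, ?_, ?_⟩
    · exact ⟨z0, hz0W, by rw [← hvz]; show v⁻¹ • (v • x) = x; rw [inv_smul_smul]⟩
    · have hsub : (fun z => v⁻¹ • z) '' W \ φ '' U ⊆ (fun z => v⁻¹ • z) '' (W \ φ '' V) := by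
        rintro z ⟨⟨w, hwW, rfl⟩, hnot⟩
        refine ⟨w, ⟨hwW, fun hwv => ?_⟩, rfl⟩
        obtain ⟨b, hbV, rfl⟩ := hwv
        refine hnot ⟨v⁻¹ * b, hVmul v hvV b hbV, ?_⟩
        show (v⁻¹ * b) • x = v⁻¹ • (b • x)
        rw [mul_smul]
      exact (((Homeomorph.smul (v⁻¹ : G)).isMeagre_image' (s := W \ φ '' V)).2 hWm).mono hsub
  -- Effros property at every orbit point
  have hEffB : ∀ h : G, ∀ U ∈ 𝓝 (1 : G), ∃ O : Set F.X, IsOpen O ∧ h • x ∈ O ∧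
      IsMeagre (O \ (fun g : G => g • (h • x)) '' U) := by
    intro h U hU
    have hconj : (fun g : G => h * g * h⁻¹) ⁻¹' U ∈ 𝓝 (1 : G) := by
      have hc : Continuous fun g : G => h * g * h⁻¹ :=
        (continuous_const.mul continuous_id).mul continuous_const
      apply hc.tendsto (1 : G)
      simpa using hU
    obtain ⟨O₁, hO₁o, hxO₁, hO₁m⟩ := hEffA _ hconj
    refine ⟨(fun z => h • z) '' O₁, (Homeomorph.smul (h : G)).isOpenMap _ hO₁o,
      ⟨x, hxO₁, rfl⟩, ?_⟩
    have hsub : (fun z => h • z) '' O₁ \ (fun g : G => g • (h • x)) '' U ⊆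
        (fun z => h • z) '' (O₁ \ φ '' ((fun g : G => h * g * h⁻¹) ⁻¹' U)) := by
      rintro z ⟨⟨w, hw, rfl⟩, hnot⟩
      refine ⟨w, ⟨hw, fun hwφ => ?_⟩, rfl⟩
      obtain ⟨g, hgU, rfl⟩ := hwφ
      refine hnot ⟨h * g * h⁻¹, hgU, ?_⟩
      show (h * g * h⁻¹) • (h • x) = h • (g • x)
      rw [smul_smul, smul_smul]
      congr 1
      group
    exact (((Homeomorph.smul (h : G)).isMeagre_image'
      (s := O₁ \ φ '' ((fun g : G => h * g * h⁻¹) ⁻¹' U))).2 hO₁m).mono hsub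
  -- ultrafilter form of the Effros theorem
  have hEffU : ∀ (v : Ultrafilter G) (h : G),
      Filter.Tendsto (fun g : G => g • x) (↑v) (𝓝 (h • x)) → (↑v : Filter G) ≤ 𝓝 h := by
    intro v h hten
    intro W hW
    have hWh : (fun g : G => g * h) ⁻¹' W ∈ 𝓝 (1 : G) := by
      have hc : Continuous fun g : G => g * h := continuous_id.mul continuous_const
      apply hc.tendsto (1 : G)
      simpa using hW
    obtain ⟨V, hVo, hV1, hVmul⟩ := exists_nhds_inv_mul hWh
    have hVnb : V ∈ 𝓝 (1 : G) := hVo.mem_nhds hV1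
    obtain ⟨O, hOo, hOy, hOm⟩ := hEffB h V hVnb
    have hA : {g : G | g • x ∈ O} ∈ v := hten (hOo.mem_nhds hOy)
    refine Filter.mem_of_superset hA ?_
    intro g hg
    obtain ⟨O', hO'o, hO'y, hO'm⟩ := hEffB g V hVnb
    set P := O ∩ O' with hPdef
    have hPne : P.Nonempty := ⟨g • x, hg, hO'y⟩
    have hPo : IsOpen P := hOo.inter hO'o
    have hkey : (P ∩ ((fun g' : G => g' • (h • x)) '' V) ∩
        ((fun g' : G => g' • (g • x)) '' V)).Nonempty := by
      by_contra hc
      rw [not_nonempty_iff_eq_empty, eq_empty_iff_forall_notMem] at hc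
      apply hPo.not_isMeagre hPne
      apply (hOm.union' hO'm).mono
      intro z hzP
      by_cases hz1 : z ∈ (fun g' : G => g' • (h • x)) '' V
      · by_cases hz2 : z ∈ (fun g' : G => g' • (g • x)) '' V
        · exact absurd ⟨⟨hzP, hz1⟩, hz2⟩ (hc z)
        · exact Or.inr ⟨hzP.2, hz2⟩
      · exact Or.inl ⟨hzP.1, hz1⟩
    obtain ⟨z, ⟨⟨hzP, u, huV, huz⟩, u', hu'V, hu'z⟩⟩ := hkey
    -- u • (h • x) = z = u' • (g • x)
    have huz' : u • (h • x) = z := huz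
    have hu'z' : u' • (g • x) = z := hu'z
    have heq : (u * h) • x = (u' * g) • x := by
      rw [← smul_smul, ← smul_smul, huz', hu'z']
    have heq2 := hinj (u * h) (u' * g) heq
    have hgeq : u'⁻¹ * (u * h) = g := by rw [heq2, inv_mul_cancel_left]
    show g ∈ W
    rw [← hgeq]
    have h3 : (u'⁻¹ * u) * h ∈ W := hVmul u' hu'V u huV
    rwa [mul_assoc] at h3
  -- density of every orbit
  have hdense : ∀ z : F.X, Dense (MulAction.orbit G z) := by
    intro z
    have hsf : IsSubflow F (closure (MulAction.orbit G z)) := by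
      refine ⟨⟨z, subset_closure (MulAction.mem_orbit_self z)⟩, isClosed_closure, ?_⟩
      intro g y hy
      have h1 : (fun w => g • w) '' closure (MulAction.orbit G z) ⊆
          closure ((fun w => g • w) '' MulAction.orbit G z) :=
        image_closure_subset_closure_image (continuous_const_smul g)
      have h2 : (fun w => g • w) '' MulAction.orbit G z = MulAction.orbit G z := by
        rw [image_smul, MulAction.smul_orbit]
      have := h1 ⟨y, hy, rfl⟩
      rwa [h2] at this
    rw [dense_iff_closure_eq]
    exact hmin _ hsf
  -- the orbit of x is comeagre
  have horbcom : IsMeagre ((MulAction.orbit G x)ᶜ) := by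
    obtain ⟨O, hOo, hxO, hOm⟩ := hEffA univ univ_mem
    have hOm' : IsMeagre (O \ MulAction.orbit G x) := by
      have himg : φ '' univ = MulAction.orbit G x := by rw [image_univ]; rfl
      rwa [himg] at hOm
    have hcov : ∀ z : F.X, ∃ d ∈ D, d⁻¹ • z ∈ O := by
      intro z
      have hT : IsOpen ((fun d : G => d⁻¹ • z) ⁻¹' O) :=
        hOo.preimage (continuous_inv.smul continuous_const)
      have hTne : ((fun d : G => d⁻¹ • z) ⁻¹' O).Nonempty := by
        obtain ⟨y, hyorb, hyO⟩ := (hdense z).exists_mem_open hOo ⟨x, hxO⟩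
        obtain ⟨g, rfl⟩ := hyorb
        refine ⟨g⁻¹, ?_⟩
        show g⁻¹⁻¹ • z ∈ O
        rwa [inv_inv]
      obtain ⟨d, hdD, hdT⟩ := hDdense.exists_mem_open hT hTne
      exact ⟨d, hdD, hdT⟩
    have hsub : (MulAction.orbit G x)ᶜ ⊆ ⋃ d ∈ D,
        (fun z => d • z) '' (O \ MulAction.orbit G x) := by
      intro z hz
      obtain ⟨d, hdD, hdO⟩ := hcov z
      refine mem_biUnion hdD ⟨d⁻¹ • z, ⟨hdO, fun hor => hz ?_⟩, by simp⟩
      obtain ⟨g, hg⟩ := hor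
      have hg' : g • x = d⁻¹ • z := hg
      refine ⟨d * g, ?_⟩
      show (d * g) • x = z
      rw [← smul_smul, hg', smul_inv_smul]
    haveI := hDcnt.to_subtype
    refine IsMeagre.mono hsub ?_
    rw [biUnion_eq_iUnion]
    exact isMeagre_iUnion' fun d =>
      ((Homeomorph.smul ((d : G))).isMeagre_image' (s := O \ MulAction.orbit G x)).2 hOm'
  -- ===== The Ellis semigroup =====
  set Λ : G → (F.X → F.X) := fun g z => g • z with hΛdef
  set E : Set (F.X → F.X) := closure (range Λ) with hEdef
  have hEclosed : IsClosed E := isClosed_closure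
  have hEcomp : IsCompact E := hEclosed.isCompact
  have hΛinj : Function.Injective Λ := fun a b hab => hinj a b (congrFun hab x)
  -- ultrafilter characterization of membership in E
  have hchar : ∀ p ∈ E, ∃ v : Ultrafilter G, ∀ z : F.X,
      Filter.Tendsto (fun g : G => g • z) (↑v) (𝓝 (p z)) := by
    intro p hp
    obtain ⟨u, huR, hule⟩ := mem_closure_iff_ultrafilter.1 hp
    set v := u.comap hΛinj huR with hvdef
    have hv : (↑v : Filter G).map Λ = ↑u := by
      rw [hvdef, Ultrafilter.coe_comap]
      exact map_comap_of_mem huR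
    refine ⟨v, fun z => ?_⟩
    have h1 : Filter.Tendsto (fun f : F.X → F.X => f z) (↑u) (𝓝 (p z)) :=
      ((continuous_apply z).tendsto p).mono_left hule
    have h2 : (fun g : G => g • z) = (fun f : F.X → F.X => f z) ∘ Λ := rfl
    rw [h2, ← tendsto_map'_iff, hv]
    exact h1
  have hId : Λ 1 = id := by funext z; show (1 : G) • z = z; rw [one_smul]
  have hIdE : (id : F.X → F.X) ∈ E := hId ▸ subset_closure ⟨1, rfl⟩
  -- elements of E whose value at x lies in the orbit are translations
  have hKey1 : ∀ p ∈ E, ∀ h : G, p x = h • x → p = Λ h := by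
    intro p hp h hpx
    obtain ⟨v, hv⟩ := hchar p hp
    have hle : (↑v : Filter G) ≤ 𝓝 h := hEffU v h (hpx ▸ hv x)
    funext z
    have h1 : Filter.Tendsto (fun g : G => g • z) (↑v) (𝓝 (h • z)) :=
      ((continuous_id.smul continuous_const).tendsto h).mono_left hle
    exact tendsto_nhds_unique (hv z) h1
  -- E is closed under composition
  have hLg : ∀ g : G, ∀ q ∈ E, Λ g ∘ q ∈ E := by
    intro g q hq
    have hc : Continuous fun f : F.X → F.X => Λ g ∘ f := by
      apply continuous_pi
      intro z
      exact (continuous_apply z).const_smul g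
    have himg : (fun f : F.X → F.X => Λ g ∘ f) '' range Λ ⊆ range Λ := by
      rintro _ ⟨_, ⟨a, rfl⟩, rfl⟩
      refine ⟨g * a, ?_⟩
      funext z
      show (g * a) • z = g • (a • z)
      rw [mul_smul]
    have h2 : Λ g ∘ q ∈ (fun f : F.X → F.X => Λ g ∘ f) '' closure (range Λ) := ⟨q, hq, rfl⟩
    exact closure_mono himg (image_closure_subset_closure_image hc h2)
  have hcompE : ∀ p ∈ E, ∀ q ∈ E, p ∘ q ∈ E := by
    intro p hp q hq
    have hc : Continuous fun f : F.X → F.X => f ∘ q := by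
      apply continuous_pi
      intro z
      exact continuous_apply (q z)
    have himg : (fun f : F.X → F.X => f ∘ q) '' range Λ ⊆ E := by
      rintro _ ⟨_, ⟨a, rfl⟩, rfl⟩
      exact hLg a q hq
    have h2 : p ∘ q ∈ (fun f : F.X → F.X => f ∘ q) '' closure (range Λ) := ⟨p, hp, rfl⟩
    exact closure_minimal himg hEclosed (image_closure_subset_closure_image hc h2)
  -- evaluation at any point is onto (minimality)
  have hfull : ∀ w : F.X, (fun q : F.X → F.X => q w) '' E = univ := by
    intro w
    apply hmin
    refine ⟨⟨w, id, hIdE, rfl⟩, (hEcomp.image (continuous_apply w)).isClosed, ?_⟩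
    rintro g _ ⟨q, hq, rfl⟩
    exact ⟨Λ g ∘ q, hLg g q hq, rfl⟩
  -- left inverses
  have hleftinv : ∀ p ∈ E, ∃ q ∈ E, q ∘ p = id := by
    intro p hp
    have hx' : x ∈ (fun q : F.X → F.X => q (p x)) '' E := (hfull (p x)).symm ▸ mem_univ x
    obtain ⟨q, hq, hqx⟩ := hx'
    have hqx' : q (p x) = x := hqx
    refine ⟨q, hq, ?_⟩
    have h2 : q ∘ p = Λ 1 := by
      apply hKey1 _ (hcompE q hq p hp) 1
      show q (p x) = (1 : G) • x
      rw [hqx', one_smul]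
    rw [h2, hId]
  -- two-sided inverses
  have htwoinv : ∀ p ∈ E, ∃ q ∈ E, q ∘ p = id ∧ p ∘ q = id := by
    intro p hp
    obtain ⟨q, hq, hqp⟩ := hleftinv p hp
    obtain ⟨r, hr, hrq⟩ := hleftinv q hq
    have hpr : p = r := by
      calc p = (r ∘ q) ∘ p := by rw [hrq]; rfl
      _ = r ∘ (q ∘ p) := rfl
      _ = r := by rw [hqp]; rfl
    exact ⟨q, hq, hqp, by rw [hpr, hrq]⟩
  -- evaluation at x is injective on E
  have hevinj : ∀ p ∈ E, ∀ p' ∈ E, p x = p' x → p = p' := by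
    intro p hp p' hp' hpp
    obtain ⟨q, hq, hqp', hp'q⟩ := htwoinv p' hp'
    have h2 : q ∘ p = id := by
      have h1 : (q ∘ p) x = (1 : G) • x := by
        show q (p x) = (1 : G) • x
        rw [hpp, one_smul]
        exact congrFun hqp' x
      have := hKey1 _ (hcompE q hq p hp) 1 h1
      rw [this, hId]
    calc p = (p' ∘ q) ∘ p := by rw [hp'q]; rfl
    _ = p' ∘ (q ∘ p) := rfl
    _ = p' := by rw [h2]; rfl
  -- ===== the orbit of x is everything =====
  have horbit_univ : MulAction.orbit G x = univ := by
    by_contra hne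
    have hexy : ∃ y : F.X, y ∉ MulAction.orbit G x := by
      by_contra hc
      push_neg at hc
      exact hne (eq_univ_of_forall hc)
    obtain ⟨y, hy⟩ := hexy
    have hyE : y ∈ (fun q : F.X → F.X => q x) '' E := (hfull x).symm ▸ mem_univ y
    obtain ⟨p, hp, hpx⟩ := hyE
    have hpx' : p x = y := hpx
    obtain ⟨p₀, hp₀, hqp₀, hpq₀⟩ := htwoinv p hp
    haveI hEcs : CompactSpace (E : Set (F.X → F.X)) := isCompact_iff_compactSpace.1 hEcomp
    set ev : E → F.X := fun q => q.1 x with hevdef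
    have hevc : Continuous ev := (continuous_apply x).comp continuous_subtype_val
    have hbij : Function.Bijective ev := by
      constructor
      · intro a b hab
        exact Subtype.ext (hevinj _ a.2 _ b.2 hab)
      · intro w
        have := (hfull x).symm ▸ mem_univ w
        obtain ⟨q, hq, hqw⟩ := this
        exact ⟨⟨q, hq⟩, hqw⟩
    set eEq : E ≃ F.X := Equiv.ofBijective ev hbij with heEqdef
    have heEqc : Continuous eEq := hevc
    set e : (E : Set (F.X → F.X)) ≃ₜ F.X := heEqc.homeoOfEquivCompactToT2 with hedef
    -- right translation by p as a homeomorphism of E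
    have hRc : Continuous fun q : E => (⟨q.1 ∘ p, hcompE _ q.2 _ hp⟩ : E) := by
      apply Continuous.subtype_mk
      apply continuous_pi
      intro z
      exact (continuous_apply (p z)).comp continuous_subtype_val
    have hRc0 : Continuous fun q : E => (⟨q.1 ∘ p₀, hcompE _ q.2 _ hp₀⟩ : E) := by
      apply Continuous.subtype_mk
      apply continuous_pi
      intro z
      exact (continuous_apply (p₀ z)).comp continuous_subtype_val
    set RpE : (E : Set (F.X → F.X)) ≃ₜ (E : Set (F.X → F.X)) :=
      { toFun := fun q => ⟨q.1 ∘ p, hcompE _ q.2 _ hp⟩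
        invFun := fun q => ⟨q.1 ∘ p₀, hcompE _ q.2 _ hp₀⟩
        left_inv := fun q => Subtype.ext (by
          show (q.1 ∘ p) ∘ p₀ = q.1
          rw [Function.comp_assoc, hpq₀]
          rfl)
        right_inv := fun q => Subtype.ext (by
          show (q.1 ∘ p₀) ∘ p = q.1
          rw [Function.comp_assoc, hqp₀]
          rfl)
        continuous_toFun := hRc
        continuous_invFun := hRc0 } with hRpEdef
    set τ : F.X ≃ₜ F.X := (e.symm.trans RpE).trans e with hτdef
    have hτ : ∀ g : G, τ (g • x) = g • y := by
      intro g
      have hΛgE : Λ g ∈ E := subset_closure ⟨g, rfl⟩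
      have h1 : e ⟨Λ g, hΛgE⟩ = g • x := rfl
      have h2 : e.symm (g • x) = ⟨Λ g, hΛgE⟩ := by
        rw [← h1]
        exact e.symm_apply_apply _
      show e (RpE (e.symm (g • x))) = g • y
      rw [h2]
      show (Λ g ∘ p) x = g • y
      show g • (p x) = g • y
      rw [hpx']
    have hτorb : τ '' (MulAction.orbit G x) = MulAction.orbit G y := by
      ext w
      constructor
      · rintro ⟨_, ⟨g, rfl⟩, rfl⟩
        exact ⟨g, (hτ g).symm⟩
      · rintro ⟨g, rfl⟩
        exact ⟨g • x, ⟨g, rfl⟩, hτ g⟩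
    have hdisj : MulAction.orbit G y ∩ MulAction.orbit G x = ∅ := by
      rw [eq_empty_iff_forall_notMem]
      rintro w ⟨⟨g, rfl⟩, g', hg'⟩
      apply hy
      refine ⟨g⁻¹ * g', ?_⟩
      show (g⁻¹ * g') • x = y
      have hg'2 : g' • x = g • y := hg'
      rw [← smul_smul, hg'2, inv_smul_smul]
    have hycom : IsMeagre ((MulAction.orbit G y)ᶜ) := by
      have h1 := (τ.isMeagre_image' (s := (MulAction.orbit G x)ᶜ)).2 horbcom
      have him : τ '' ((MulAction.orbit G x)ᶜ) = (MulAction.orbit G y)ᶜ := by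
        rw [image_compl_eq τ.bijective, hτorb]
      rwa [him] at h1
    have huniv : IsMeagre (univ : Set F.X) := by
      have hsub : (univ : Set F.X) ⊆ (MulAction.orbit G x)ᶜ ∪ (MulAction.orbit G y)ᶜ := by
        intro w _
        by_cases hw : w ∈ MulAction.orbit G x
        · right
          intro hw2
          rw [eq_empty_iff_forall_notMem] at hdisj
          exact hdisj w ⟨hw2, hw⟩
        · left; exact hw
      exact (horbcom.union' hycom).mono hsub
    obtain ⟨w⟩ := (inferInstance : Nonempty F.X)
    exact isOpen_univ.not_isMeagre ⟨w, mem_univ w⟩ huniv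
  -- ===== final contradiction: G would be sequentially compact =====
  letI := TopologicalSpace.upgradeIsCompletelyMetrizable G
  have hnsc : ¬ IsSeqCompact (univ : Set G) := by
    intro h
    exact hG (compactSpace_iff_seqCompactSpace.2 ⟨h⟩)
  have hex : ∃ u : ℕ → G, ∀ (a : G) (ψ : ℕ → ℕ), StrictMono ψ →
      ¬ Filter.Tendsto (u ∘ ψ) atTop (𝓝 a) := by
    by_contra hc
    push_neg at hc
    apply hnsc
    intro u _
    obtain ⟨a, ψ, hψ, hten⟩ := hc u
    exact ⟨a, mem_univ a, ψ, hψ, hten⟩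
  obtain ⟨u, hu⟩ := hex
  set 𝒱 : Ultrafilter ℕ := Ultrafilter.of atTop with h𝒱def
  have h𝒱 : (↑𝒱 : Filter ℕ) ≤ atTop := Ultrafilter.of_le _
  obtain ⟨y, -, hyle⟩ := isCompact_univ.ultrafilter_le_nhds (𝒱.map fun n => u n • x)
    (by rw [le_principal_iff]; exact univ_mem)
  obtain ⟨h, hh⟩ : ∃ h : G, h • x = y := by
    have : y ∈ MulAction.orbit G x := by rw [horbit_univ]; exact mem_univ y
    exact this
  have hten : Filter.Tendsto (fun g : G => g • x) (↑(𝒱.map u)) (𝓝 (h • x)) := by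
    rw [hh]
    have hmm : ((↑(𝒱.map u) : Filter G)).map (fun g : G => g • x) =
        ↑(𝒱.map fun n => u n • x) := by
      rw [Ultrafilter.coe_map, Ultrafilter.coe_map, Filter.map_map]
      rfl
    show ((↑(𝒱.map u) : Filter G)).map (fun g : G => g • x) ≤ 𝓝 y
    rw [hmm]
    exact hyle
  have hle := hEffU (𝒱.map u) h hten
  have hcluster : MapClusterPt h atTop u := by
    have h1 : (↑(𝒱.map u) : Filter G) ≤ 𝓝 h ⊓ Filter.map u atTop := by
      refine le_inf hle ?_
      rw [Ultrafilter.coe_map]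
      exact Filter.map_mono h𝒱
    exact Filter.neBot_of_le h1
  obtain ⟨ψ, hψmono, hψten⟩ := TopologicalSpace.FirstCountableTopology.tendsto_subseq hcluster
  exact hu h ψ hψmono hψten
end

section
/- Let G be a topological group and let φ: L → K be an affine G-irreducible extension of affine G-flows. Then φ maps cl(ext(L)) onto cl(ext(K)), and the restriction of φ to cl(ext(L)) is a G-irreducible extension of G-flows from cl(ext(L)) onto cl(ext(K)). -/
universe u v w x

/-- An affine `G`-flow: a nonempty compact convex subset of a Hausdorff locally convex
real topological vector space, equipped with a continuous action of `G` by affine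
homeomorphisms.  The action is recorded as a function `smul : G → E → E` on the ambient
space whose behaviour is only constrained on `carrier`. -/
structure AffineFlow (G : Type u) [Group G] [TopologicalSpace G] [IsTopologicalGroup G] where
  /-- the ambient locally convex topological real vector space -/
  E : Type v
  [instAddCommGroup : AddCommGroup E]
  [instModule : Module ℝ E]
  [instTopologicalSpace : TopologicalSpace E]
  [instT2Space : T2Space E]
  [instTopologicalAddGroup : IsTopologicalAddGroup E]
  [instContinuousSMul : ContinuousSMul ℝ E]
  [instLocallyConvexSpace : LocallyConvexSpace ℝ E]
  /-- the compact convex set itself -/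
  carrier : Set E
  nonempty' : carrier.Nonempty
  isCompact' : IsCompact carrier
  convex' : Convex ℝ carrier
  /-- the action of `G` -/
  smul : G → E → E
  smul_mem' : ∀ g : G, ∀ x ∈ carrier, smul g x ∈ carrier
  one_smul' : ∀ x ∈ carrier, smul 1 x = x
  mul_smul' : ∀ g h : G, ∀ x ∈ carrier, smul (g * h) x = smul g (smul h x)
  continuousOn_smul' : ContinuousOn (fun p : G × E => smul p.1 p.2) (Set.univ ×ˢ carrier)
  smul_affine' : ∀ g : G, ∀ x ∈ carrier, ∀ y ∈ carrier, ∀ t : ℝ, 0 ≤ t → t ≤ 1 →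
    smul g (t • x + (1 - t) • y) = t • smul g x + (1 - t) • smul g y

attribute [instance] AffineFlow.instAddCommGroup AffineFlow.instModule
  AffineFlow.instTopologicalSpace AffineFlow.instT2Space AffineFlow.instTopologicalAddGroup
  AffineFlow.instContinuousSMul AffineFlow.instLocallyConvexSpace

/-- An affine `G`-map between affine `G`-flows: a continuous affine `G`-equivariant map
(recorded on the ambient spaces, with all conditions on the carriers). -/
def IsAffineGMap {G : Type u} [Group G] [TopologicalSpace G] [IsTopologicalGroup G]
    (K : AffineFlow.{u, v} G) (L : AffineFlow.{u, w} G) (f : K.E → L.E) : Prop :=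
  Set.MapsTo f K.carrier L.carrier ∧ ContinuousOn f K.carrier ∧
    (∀ g : G, ∀ x ∈ K.carrier, f (K.smul g x) = L.smul g (f x)) ∧
    ∀ x ∈ K.carrier, ∀ y ∈ K.carrier, ∀ t : ℝ, 0 ≤ t → t ≤ 1 →
      f (t • x + (1 - t) • y) = t • f x + (1 - t) • f y

/-- An affine extension: a surjective affine `G`-map. -/
def IsAffineExtension {G : Type u} [Group G] [TopologicalSpace G] [IsTopologicalGroup G]
    (K : AffineFlow.{u, v} G) (L : AffineFlow.{u, w} G) (f : K.E → L.E) : Prop :=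
  IsAffineGMap K L f ∧ f '' K.carrier = L.carrier

/-- An affine subflow: a nonempty closed convex `G`-invariant subset. -/
def AffineFlow.IsAffineSubflow {G : Type u} [Group G] [TopologicalSpace G] [IsTopologicalGroup G]
    (K : AffineFlow.{u, v} G) (C : Set K.E) : Prop :=
  C.Nonempty ∧ C ⊆ K.carrier ∧ IsClosed C ∧ Convex ℝ C ∧ ∀ g : G, ∀ x ∈ C, K.smul g x ∈ C

/-- An affine extension `f : K → L` is affine `G`-irreducible if no proper affine subflow
of `K` maps onto `L`. -/
def IsAffineIrreducibleExt {G : Type u} [Group G] [TopologicalSpace G] [IsTopologicalGroup G]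
    (K : AffineFlow.{u, v} G) (L : AffineFlow.{u, w} G) (f : K.E → L.E) : Prop :=
  IsAffineExtension K L f ∧
    ∀ C : Set K.E, K.IsAffineSubflow C → C ≠ K.carrier → f '' C ≠ L.carrier

/-- An affine extension `f : K → L` is proximally irreducible if the only affine subflow
`C` of `K` meeting `conv (cl (ext K) ∩ f ⁻¹' {y})` for every `y ∈ cl (ext L)` is `K` itself. -/
def IsProximallyIrreducibleExt {G : Type u} [Group G] [TopologicalSpace G] [IsTopologicalGroup G]
    (K : AffineFlow.{u, v} G) (L : AffineFlow.{u, w} G) (f : K.E → L.E) : Prop :=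
  IsAffineExtension K L f ∧
    ∀ C : Set K.E, K.IsAffineSubflow C →
      (∀ y ∈ closure (L.carrier.extremePoints ℝ),
        (C ∩ convexHull ℝ (closure (K.carrier.extremePoints ℝ) ∩ f ⁻¹' {y})).Nonempty) →
      C = K.carrier


open Set Topology Pointwise

section Milman
variable {E : Type*} [AddCommGroup E] [Module ℝ E] [TopologicalSpace E]
  [IsTopologicalAddGroup E] [ContinuousSMul ℝ E]

lemma myIsCompact_convexJoin {s t : Set E} (hs : IsCompact s) (ht : IsCompact t) :
    IsCompact (convexJoin ℝ s t) := by
  have h : convexJoin ℝ s t =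
      (fun p : ℝ × E × E => (1 - p.1) • p.2.1 + p.1 • p.2.2) '' (Set.Icc (0:ℝ) 1 ×ˢ s ×ˢ t) := by
    ext z
    constructor
    · intro hz
      rw [mem_convexJoin] at hz
      obtain ⟨a, ha, b, hb, hab⟩ := hz
      rw [segment_eq_image] at hab
      obtain ⟨θ, hθ, rfl⟩ := hab
      exact ⟨(θ, a, b), ⟨hθ, ha, hb⟩, rfl⟩
    · rintro ⟨⟨θ, a, b⟩, ⟨hθ, ha, hb⟩, rfl⟩
      rw [mem_convexJoin]
      exact ⟨a, ha, b, hb, by rw [segment_eq_image]; exact ⟨θ, hθ, rfl⟩⟩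
  rw [h]
  exact (isCompact_Icc.prod (hs.prod ht)).image (by fun_prop)

lemma myIsCompact_convexHull_biUnion {ι : Type*} (F : Finset ι) (K : ι → Set E)
    (hcomp : ∀ i ∈ F, IsCompact (K i)) (hconv : ∀ i ∈ F, Convex ℝ (K i)) :
    IsCompact (convexHull ℝ (⋃ i ∈ F, K i)) := by
  classical
  induction F using Finset.induction_on with
  | empty => simp
  | @insert a F ha ih =>
    rw [Finset.set_biUnion_insert]
    have hKa := hcomp a (Finset.mem_insert_self a F)
    have hKac := hconv a (Finset.mem_insert_self a F)
    have ih' := ih (fun i hi => hcomp i (Finset.mem_insert_of_mem hi))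
      (fun i hi => hconv i (Finset.mem_insert_of_mem hi))
    rcases (K a).eq_empty_or_nonempty with hKae | hKane
    · rw [hKae, Set.empty_union]; exact ih'
    rcases (⋃ i ∈ F, K i).eq_empty_or_nonempty with hUe | hUne
    · rw [hUe, Set.union_empty, hKac.convexHull_eq]; exact hKa
    · rw [convexHull_union hKane hUne, hKac.convexHull_eq]
      exact myIsCompact_convexJoin hKa ih'

omit [Module ℝ E] [ContinuousSMul ℝ E] in
lemma myClosure_subset_add {A W : Set E} (hW : W ∈ 𝓝 (0:E)) : closure A ⊆ A + W := by
  intro z hz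
  have h0 : (Homeomorph.subLeft z) 0 = z := by simp
  have hN : (Homeomorph.subLeft z) '' W ∈ 𝓝 z := by
    have hm := (Homeomorph.subLeft z).map_nhds_eq 0
    rw [h0] at hm
    rw [← hm]
    exact Filter.image_mem_map hW
  obtain ⟨p, hpN, hpA⟩ := mem_closure_iff_nhds.1 hz _ hN
  obtain ⟨w, hw, hwp⟩ := hpN
  refine Set.mem_add.2 ⟨p, hpA, w, hw, ?_⟩
  have hzw : z - w = p := hwp
  rw [← hzw]; abel

/-- **Milman's theorem** -/
lemma myMilman [T2Space E] [LocallyConvexSpace ℝ E] {t : Set E} (ht : IsCompact t)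
    (hs : IsCompact (closure (convexHull ℝ t))) :
    (closure (convexHull ℝ t)).extremePoints ℝ ⊆ t := by
  intro x hx
  by_contra hxt
  obtain ⟨V₀, hV₀, hV₀sep⟩ := compact_open_separated_add_right ht isOpen_compl_singleton
    (Set.subset_compl_singleton_iff.2 hxt)
  obtain ⟨V₁, hV₁, hV₁half⟩ := exists_nhds_zero_half hV₀
  obtain ⟨V, ⟨hVmem, hVconv⟩, hVsub⟩ := (LocallyConvexSpace.convex_basis_zero ℝ E).mem_iff.1 hV₁
  have hcover : ∀ y ∈ t, {y} + V ∈ 𝓝 y := by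
    intro y _
    have h0 : (Homeomorph.addLeft y) 0 = y := by simp
    have hm := (Homeomorph.addLeft y).map_nhds_eq 0
    rw [h0] at hm
    rw [Set.singleton_add, show (fun b => y + b) = ⇑(Homeomorph.addLeft y) from rfl, ← hm]
    exact Filter.image_mem_map hVmem
  obtain ⟨F, hFt, hFcover⟩ := ht.elim_nhds_subcover (fun y => {y} + V) hcover
  set Ky : E → Set E := fun y => closure (convexHull ℝ (t ∩ ({y} + V))) with hKydef
  have hKysub : ∀ y, Ky y ⊆ closure (convexHull ℝ t) :=
    fun y => closure_mono (convexHull_mono Set.inter_subset_left)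
  have hKycomp : ∀ y ∈ F, IsCompact (Ky y) :=
    fun y _ => hs.of_isClosed_subset isClosed_closure (hKysub y)
  have hKyconv : ∀ y ∈ F, Convex ℝ (Ky y) := fun y _ => (convex_convexHull ℝ _).closure
  have hMcomp : IsCompact (convexHull ℝ (⋃ y ∈ F, Ky y)) :=
    myIsCompact_convexHull_biUnion F Ky hKycomp hKyconv
  have hsubM : closure (convexHull ℝ t) ⊆ convexHull ℝ (⋃ y ∈ F, Ky y) := by
    apply closure_minimal _ hMcomp.isClosed
    apply convexHull_mono
    intro z hz
    obtain ⟨y, hyF, hzy⟩ := Set.mem_iUnion₂.1 (hFcover hz)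
    exact Set.mem_iUnion₂.2 ⟨y, hyF, subset_closure (subset_convexHull ℝ _ ⟨hz, hzy⟩)⟩
  have hMsub : convexHull ℝ (⋃ y ∈ F, Ky y) ⊆ closure (convexHull ℝ t) :=
    convexHull_min (Set.iUnion₂_subset fun y _ => hKysub y) (convex_convexHull ℝ t).closure
  have hxM : x ∈ (convexHull ℝ (⋃ y ∈ F, Ky y)).extremePoints ℝ :=
    inter_extremePoints_subset_extremePoints_of_subset hMsub ⟨hsubM hx.1, hx⟩
  have hxU : x ∈ ⋃ y ∈ F, Ky y := extremePoints_convexHull_subset hxM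
  obtain ⟨y, hyF, hxKy⟩ := Set.mem_iUnion₂.1 hxU
  have hyV : Ky y ⊆ closure ({y} + V) :=
    closure_mono (convexHull_min Set.inter_subset_right ((convex_singleton y).add hVconv))
  have hxin : x ∈ {y} + V + V₁ := (myClosure_subset_add hV₁) (hyV hxKy)
  have hxtV₀ : x ∈ t + V₀ := by
    obtain ⟨u, hu, v, hv, huv⟩ := Set.mem_add.1 hxin
    obtain ⟨w, hw, w', hw', hww⟩ := Set.mem_add.1 hu
    rw [Set.mem_singleton_iff] at hw
    subst hw
    exact Set.mem_add.2 ⟨w, hFt w hyF, w' + v, hV₁half w' (hVsub hw') v hv,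
      by rw [← huv, ← hww]; abel⟩
  exact hV₀sep hxtV₀ rfl

end Milman

section FlowLemmas

open Set

namespace AffineFlow

variable {G : Type u} [Group G] [TopologicalSpace G] [IsTopologicalGroup G]
  (M : AffineFlow.{u, v} G)

lemma carrier_isClosed : IsClosed M.carrier := M.isCompact'.isClosed

lemma continuousOn_smul (g : G) : ContinuousOn (M.smul g) M.carrier := by
  have h2 : Continuous (fun x : M.E => ((g, x) : G × M.E)) := by fun_prop
  exact M.continuousOn_smul'.comp h2.continuousOn (fun x hx => ⟨Set.mem_univ _, hx⟩)

lemma smul_left_inv (g : G) {x : M.E} (hx : x ∈ M.carrier) :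
    M.smul g⁻¹ (M.smul g x) = x := by
  rw [← M.mul_smul' g⁻¹ g x hx, inv_mul_cancel, M.one_smul' x hx]

lemma smul_mem_extremePoints (g : G) {x : M.E} (hx : x ∈ M.carrier.extremePoints ℝ) :
    M.smul g x ∈ M.carrier.extremePoints ℝ := by
  obtain ⟨hxc, hxe⟩ := hx
  refine ⟨M.smul_mem' g x hxc, ?_⟩
  intro x₁ hx₁ x₂ hx₂ hseg
  obtain ⟨a, b, ha, hb, hab, habx⟩ := hseg
  have hb' : b = 1 - a := by linarith
  subst hb'
  have key : x = a • M.smul g⁻¹ x₁ + (1 - a) • M.smul g⁻¹ x₂ := by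
    calc x = M.smul g⁻¹ (M.smul g x) := (M.smul_left_inv g hxc).symm
    _ = M.smul g⁻¹ (a • x₁ + (1 - a) • x₂) := by rw [habx]
    _ = a • M.smul g⁻¹ x₁ + (1 - a) • M.smul g⁻¹ x₂ :=
        M.smul_affine' g⁻¹ x₁ hx₁ x₂ hx₂ a ha.le (by linarith)
  have h1 := hxe (M.smul_mem' g⁻¹ x₁ hx₁) (M.smul_mem' g⁻¹ x₂ hx₂)
    ⟨a, 1 - a, ha, by linarith, by ring, key.symm⟩
  calc x₁ = M.smul g⁻¹⁻¹ (M.smul g⁻¹ x₁) := (M.smul_left_inv g⁻¹ hx₁).symm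
    _ = M.smul g x := by rw [h1, inv_inv]

lemma closure_extremePoints_subset : closure (M.carrier.extremePoints ℝ) ⊆ M.carrier :=
  closure_minimal extremePoints_subset M.carrier_isClosed

lemma smul_mem_closure_extremePoints (g : G) {x : M.E}
    (hx : x ∈ closure (M.carrier.extremePoints ℝ)) :
    M.smul g x ∈ closure (M.carrier.extremePoints ℝ) := by
  have h := ((M.continuousOn_smul g).mono M.closure_extremePoints_subset).image_closure
    (s := M.carrier.extremePoints ℝ)
  have h3 : M.smul g '' (M.carrier.extremePoints ℝ) ⊆ M.carrier.extremePoints ℝ := by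
    rintro _ ⟨y, hy, rfl⟩; exact M.smul_mem_extremePoints g hy
  exact closure_mono h3 (h ⟨x, hx, rfl⟩)

lemma image_convexHull_subset {F : Type x} [AddCommGroup F] [Module ℝ F] (p : M.E → F)
    (hp : ∀ x ∈ M.carrier, ∀ y ∈ M.carrier, ∀ t : ℝ, 0 ≤ t → t ≤ 1 →
      p (t • x + (1 - t) • y) = t • p x + (1 - t) • p y)
    {B : Set M.E} (hB : B ⊆ M.carrier) :
    p '' (convexHull ℝ B) ⊆ convexHull ℝ (p '' B) := by
  have hBc : convexHull ℝ B ⊆ M.carrier := convexHull_min hB M.convex'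
  have hS : convexHull ℝ B ⊆ {x | x ∈ convexHull ℝ B ∧ p x ∈ convexHull ℝ (p '' B)} := by
    apply convexHull_min
    · exact fun x hx => ⟨subset_convexHull ℝ B hx, subset_convexHull ℝ _ (mem_image_of_mem p hx)⟩
    · intro x hx y hy a b ha hb hab
      have hmem : a • x + b • y ∈ convexHull ℝ B := (convex_convexHull ℝ B) hx.1 hy.1 ha hb hab
      refine ⟨hmem, ?_⟩
      have hb' : b = 1 - a := by linarith
      subst hb'
      rw [hp x (hBc hx.1) y (hBc hy.1) a ha (by linarith)]
      exact (convex_convexHull ℝ (p '' B)) hx.2 hy.2 ha hb (by ring)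
  rintro _ ⟨x, hx, rfl⟩
  exact (hS hx).2

lemma image_convex {F : Type x} [AddCommGroup F] [Module ℝ F] (p : M.E → F)
    (hp : ∀ x ∈ M.carrier, ∀ y ∈ M.carrier, ∀ t : ℝ, 0 ≤ t → t ≤ 1 →
      p (t • x + (1 - t) • y) = t • p x + (1 - t) • p y)
    {C : Set M.E} (hC : C ⊆ M.carrier) (hCconv : Convex ℝ C) : Convex ℝ (p '' C) := by
  rintro _ ⟨x, hx, rfl⟩ _ ⟨y, hy, rfl⟩ a b ha hb hab
  have hb' : b = 1 - a := by linarith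
  subst hb'
  exact ⟨a • x + (1 - a) • y, hCconv hx hy ha hb hab,
    hp x (hC hx) y (hC hy) a ha (by linarith)⟩

lemma isAffineSubflow_closure_convexHull {B : Set M.E} (hBne : B.Nonempty)
    (hBsub : B ⊆ M.carrier) (hBinv : ∀ g : G, ∀ x ∈ B, M.smul g x ∈ B) :
    M.IsAffineSubflow (closure (convexHull ℝ B)) := by
  have hhull : convexHull ℝ B ⊆ M.carrier := convexHull_min hBsub M.convex'
  have hcl : closure (convexHull ℝ B) ⊆ M.carrier := closure_minimal hhull M.carrier_isClosed
  refine ⟨hBne.mono ((subset_convexHull ℝ B).trans subset_closure), hcl, isClosed_closure,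
    (convex_convexHull ℝ B).closure, ?_⟩
  intro g x hx
  have h1 : M.smul g '' closure (convexHull ℝ B) ⊆ closure (M.smul g '' convexHull ℝ B) :=
    ((M.continuousOn_smul g).mono hcl).image_closure
  have h2 : M.smul g '' convexHull ℝ B ⊆ convexHull ℝ (M.smul g '' B) :=
    M.image_convexHull_subset (M.smul g) (M.smul_affine' g) hBsub
  have h3 : M.smul g '' B ⊆ B := by rintro _ ⟨y, hy, rfl⟩; exact hBinv g y hy
  exact closure_mono (h2.trans (convexHull_mono h3)) (h1 (Set.mem_image_of_mem _ hx))

end AffineFlow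

end FlowLemmas

/-- An affine `G`-irreducible extension restricts to a `G`-irreducible
extension between the closures of the sets of extreme points. -/
theorem statement5 {G : Type u} [Group G] [TopologicalSpace G] [IsTopologicalGroup G]
    (L : AffineFlow.{u, v} G) (K : AffineFlow.{u, w} G) (f : L.E → K.E)
    (hf : IsAffineIrreducibleExt L K f) :
    f '' closure (L.carrier.extremePoints ℝ) = closure (K.carrier.extremePoints ℝ) ∧
      ∀ C : Set L.E, C.Nonempty → IsClosed C → C ⊆ closure (L.carrier.extremePoints ℝ) →
        (∀ g : G, ∀ x ∈ C, L.smul g x ∈ C) →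
        C ≠ closure (L.carrier.extremePoints ℝ) →
        f '' C ≠ closure (K.carrier.extremePoints ℝ) := by
  obtain ⟨⟨⟨hmaps, hcont, hequi, haff⟩, hsurj⟩, hirr⟩ := hf
  set AL := closure (L.carrier.extremePoints ℝ) with hALdef
  set AK := closure (K.carrier.extremePoints ℝ) with hAKdef
  have hALsub : AL ⊆ L.carrier := L.closure_extremePoints_subset
  have hAKsub : AK ⊆ K.carrier := K.closure_extremePoints_subset
  have hALcomp : IsCompact AL := L.isCompact'.of_isClosed_subset isClosed_closure hALsub
  -- Step 1: every extreme point of `K` lifts to a point of `AL`.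
  have step1 : ∀ y ∈ K.carrier.extremePoints ℝ, ∃ x ∈ AL, f x = y := by
    intro y hy
    have hyK : y ∈ K.carrier := extremePoints_subset hy
    have hyF : (L.carrier ∩ f ⁻¹' {y}).Nonempty := by
      have hy' : y ∈ f '' L.carrier := hsurj ▸ hyK
      obtain ⟨x, hx, hxy⟩ := hy'
      exact ⟨x, hx, by simp [hxy]⟩
    have hFclosed : IsClosed (L.carrier ∩ f ⁻¹' {y}) :=
      hcont.preimage_isClosed_of_isClosed L.carrier_isClosed isClosed_singleton
    have hFcomp : IsCompact (L.carrier ∩ f ⁻¹' {y}) :=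
      L.isCompact'.of_isClosed_subset hFclosed Set.inter_subset_left
    obtain ⟨x, hxF, hxe⟩ := hFcomp.extremePoints_nonempty hyF
    have hfx : f x = y := hxF.2
    have hxL : x ∈ L.carrier.extremePoints ℝ := by
      refine ⟨hxF.1, ?_⟩
      intro x₁ hx₁ x₂ hx₂ hseg
      obtain ⟨a, b, ha, hb, hab, habx⟩ := hseg
      have hb' : b = 1 - a := by linarith
      subst hb'
      have h2 : f x = a • f x₁ + (1 - a) • f x₂ := by
        rw [← habx, haff x₁ hx₁ x₂ hx₂ a ha.le (by linarith)]
      have h3 := hy.2 (hmaps hx₁) (hmaps hx₂)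
        ⟨a, 1 - a, ha, by linarith, by ring, by rw [← h2]; exact hfx⟩
      have h3' := hy.2 (hmaps hx₂) (hmaps hx₁)
        ⟨1 - a, a, hb, ha, by ring, by rw [add_comm, ← h2]; exact hfx⟩
      have hx₁F : x₁ ∈ L.carrier ∩ f ⁻¹' {y} := ⟨hx₁, by simp [h3]⟩
      have hx₂F : x₂ ∈ L.carrier ∩ f ⁻¹' {y} := ⟨hx₂, by simp [h3']⟩
      exact hxe hx₁F hx₂F ⟨a, 1 - a, ha, by linarith, by ring, habx⟩
    exact ⟨x, subset_closure hxL, hfx⟩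
  have himAL : IsCompact (f '' AL) := hALcomp.image_of_continuousOn (hcont.mono hALsub)
  have hAKsub' : AK ⊆ f '' AL := by
    apply closure_minimal _ himAL.isClosed
    intro y hy
    obtain ⟨x, hx, hxy⟩ := step1 y hy
    exact ⟨x, hx, hxy⟩
  -- The subflow generated by `B = AL ∩ f⁻¹(AK)` maps onto `K`.
  set B := AL ∩ f ⁻¹' AK with hBdef
  have hBsub : B ⊆ L.carrier := Set.inter_subset_left.trans hALsub
  have hBne : B.Nonempty := by
    obtain ⟨y, hy⟩ := K.isCompact'.extremePoints_nonempty K.nonempty'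
    obtain ⟨x, hx, hxy⟩ := step1 y hy
    exact ⟨x, hx, show f x ∈ AK by rw [hxy]; exact subset_closure hy⟩
  have hBinv : ∀ g : G, ∀ x ∈ B, L.smul g x ∈ B := by
    intro g x hx
    refine ⟨L.smul_mem_closure_extremePoints g hx.1, ?_⟩
    show f (L.smul g x) ∈ AK
    rw [hequi g x (hBsub hx)]
    exact K.smul_mem_closure_extremePoints g hx.2
  have hBclosed : IsClosed B := by
    have h1 : IsClosed (L.carrier ∩ f ⁻¹' AK) :=
      hcont.preimage_isClosed_of_isClosed L.carrier_isClosed isClosed_closure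
    have hBeq : B = AL ∩ (L.carrier ∩ f ⁻¹' AK) := by
      ext z
      constructor
      · rintro ⟨hz1, hz2⟩; exact ⟨hz1, hALsub hz1, hz2⟩
      · rintro ⟨hz1, _, hz2⟩; exact ⟨hz1, hz2⟩
    rw [hBeq]; exact isClosed_closure.inter h1
  have hC := L.isAffineSubflow_closure_convexHull hBne hBsub hBinv
  have hCsub : closure (convexHull ℝ B) ⊆ L.carrier := hC.2.1
  have hCcomp : IsCompact (closure (convexHull ℝ B)) :=
    L.isCompact'.of_isClosed_subset isClosed_closure hCsub
  have hfC : f '' closure (convexHull ℝ B) = K.carrier := by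
    apply Set.Subset.antisymm
    · rw [← hsurj]; exact Set.image_mono hCsub
    · have himcomp : IsCompact (f '' closure (convexHull ℝ B)) :=
        hCcomp.image_of_continuousOn (hcont.mono hCsub)
      have himconv : Convex ℝ (f '' closure (convexHull ℝ B)) :=
        L.image_convex f haff hCsub hC.2.2.2.1
      have hextsub : K.carrier.extremePoints ℝ ⊆ f '' closure (convexHull ℝ B) := by
        intro y hy
        obtain ⟨x, hx, hxy⟩ := step1 y hy
        have hxB : x ∈ B := ⟨hx, show f x ∈ AK by rw [hxy]; exact subset_closure hy⟩
        exact ⟨x, subset_closure (subset_convexHull ℝ _ hxB), hxy⟩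
      calc K.carrier = closure (convexHull ℝ (K.carrier.extremePoints ℝ)) :=
            (closure_convexHull_extremePoints K.isCompact' K.convex').symm
        _ ⊆ f '' closure (convexHull ℝ B) :=
            closure_minimal (convexHull_min hextsub himconv) himcomp.isClosed
  have hCeq : closure (convexHull ℝ B) = L.carrier := by
    by_contra hne
    exact hirr _ hC hne hfC
  have hBcomp : IsCompact B := L.isCompact'.of_isClosed_subset hBclosed hBsub
  have hmil : L.carrier.extremePoints ℝ ⊆ B := by
    have hm := myMilman hBcomp hCcomp
    rwa [hCeq] at hm
  have hALB : AL ⊆ B := closure_minimal hmil hBclosed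
  have goal1 : f '' AL = AK := by
    apply Set.Subset.antisymm _ hAKsub'
    rintro _ ⟨x, hx, rfl⟩
    exact (hALB hx).2
  refine ⟨goal1, ?_⟩
  -- Part 2: irreducibility of the restriction.
  intro Cs hCne hCcl hCsubAL hCinv hCneq hfCs
  apply hCneq
  have hCsubL : Cs ⊆ L.carrier := hCsubAL.trans hALsub
  have hD := L.isAffineSubflow_closure_convexHull hCne hCsubL hCinv
  have hDsub : closure (convexHull ℝ Cs) ⊆ L.carrier := hD.2.1
  have hDcomp : IsCompact (closure (convexHull ℝ Cs)) :=
    L.isCompact'.of_isClosed_subset isClosed_closure hDsub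
  have hfD : f '' closure (convexHull ℝ Cs) = K.carrier := by
    apply Set.Subset.antisymm
    · rw [← hsurj]; exact Set.image_mono hDsub
    · have himcomp : IsCompact (f '' closure (convexHull ℝ Cs)) :=
        hDcomp.image_of_continuousOn (hcont.mono hDsub)
      have himconv : Convex ℝ (f '' closure (convexHull ℝ Cs)) :=
        L.image_convex f haff hDsub hD.2.2.2.1
      have hextsub : K.carrier.extremePoints ℝ ⊆ f '' closure (convexHull ℝ Cs) := by
        intro y hy
        have hyAK : y ∈ AK := subset_closure hy
        rw [← hfCs] at hyAK
        obtain ⟨x, hx, hxy⟩ := hyAK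
        exact ⟨x, subset_closure (subset_convexHull ℝ _ hx), hxy⟩
      calc K.carrier = closure (convexHull ℝ (K.carrier.extremePoints ℝ)) :=
            (closure_convexHull_extremePoints K.isCompact' K.convex').symm
        _ ⊆ f '' closure (convexHull ℝ Cs) :=
            closure_minimal (convexHull_min hextsub himconv) himcomp.isClosed
  have hDeq : closure (convexHull ℝ Cs) = L.carrier := by
    by_contra hne
    exact hirr _ hD hne hfD
  have hCscomp : IsCompact Cs := L.isCompact'.of_isClosed_subset hCcl hCsubL
  have hm := myMilman hCscomp hDcomp
  rw [hDeq] at hm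
  exact hCsubAL.antisymm (closure_minimal hm hCcl)
end

section
/- Let G be a Polish group and Y a minimal G-flow. Then there exists a minimal G-flow X and a strongly proximal extension φ: X → Y such that for every minimal G-flow Z and every strongly proximal extension ψ: Z → Y, there exists a strongly proximal extension π: X → Z with ψ ∘ π = φ. Moreover, X is unique up to isomorphism of G-flows. -/
universe u v w x

variable {G : Type u} [Group G] [TopologicalSpace G] [IsTopologicalGroup G]

/-- The set of states on `C(X, ℝ)`: continuous positive unital linear functionals, inside
the space of all real functionals on `C(X, ℝ)` with the topology of pointwise
(i.e. weak-*) convergence.  This realizes `P(X)`. -/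
def stateSet (X : Type v) [TopologicalSpace X] : Set (C(X, ℝ) → ℝ) :=
  {μ | IsLinearMap ℝ μ ∧ Continuous μ ∧ (∀ f : C(X, ℝ), (∀ x, 0 ≤ f x) → 0 ≤ μ f) ∧ μ 1 = 1}

/-- The Dirac state at a point. -/
def diracState (X : Type v) [TopologicalSpace X] (x : X) : C(X, ℝ) → ℝ := fun f => f x

/-- The push-forward action of `G` on functionals on `C(X, ℝ)` induced by the action on a
`G`-flow `X`, so that `g • δ_x = δ_{g • x}`. -/
def stateSMul {G : Type u} [Group G] [TopologicalSpace G] [IsTopologicalGroup G]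
    (F : GFlow.{u, v} G) (g : G) (μ : C(F.X, ℝ) → ℝ) : C(F.X, ℝ) → ℝ :=
  fun f => μ (f.comp (ContinuousMap.mk (fun x => g • x) (continuous_const_smul g)))

/-- A functional `μ` on `C(X, ℝ)` is supported on a set `s` if it kills every nonnegative
continuous function vanishing on `s`. -/
def SupportedOn {G : Type u} [Group G] [TopologicalSpace G] [IsTopologicalGroup G]
    (F : GFlow.{u, v} G) (μ : C(F.X, ℝ) → ℝ) (s : Set F.X) : Prop :=
  ∀ f : C(F.X, ℝ), (∀ x, 0 ≤ f x) → (∀ x ∈ s, f x = 0) → μ f = 0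

/-- An extension `φ : X → Y` of `G`-flows is strongly proximal if for every `y ∈ Y` and
every state `μ` on `C(X, ℝ)` supported on the fiber `φ⁻¹({y})`, the weak-* closure of the
`G`-orbit of `μ` contains a Dirac state. -/
def IsStronglyProximalExt {G : Type u} [Group G] [TopologicalSpace G] [IsTopologicalGroup G]
    (F₁ : GFlow.{u, v} G) (F₂ : GFlow.{u, w} G) (φ : F₁.X → F₂.X) : Prop :=
  IsExtension F₁ F₂ φ ∧
    ∀ (y : F₂.X) (μ : C(F₁.X, ℝ) → ℝ), μ ∈ stateSet F₁.X → SupportedOn F₁ μ (φ ⁻¹' {y}) →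
      ∃ x : F₁.X, diracState F₁.X x ∈
        closure {ν : C(F₁.X, ℝ) → ℝ | ∃ g : G, ν = stateSMul F₁ g μ}
/-! ### Basic lemmas about states -/

section StateBasics

variable {X : Type w} [TopologicalSpace X]

theorem state_linear {μ : C(X, ℝ) → ℝ} (hμ : μ ∈ stateSet X) : IsLinearMap ℝ μ := hμ.1

theorem state_map_sub {μ : C(X, ℝ) → ℝ} (hμ : IsLinearMap ℝ μ) (f₁ f₂ : C(X, ℝ)) :
    μ (f₁ - f₂) = μ f₁ - μ f₂ := by
  have := (IsLinearMap.mk' μ hμ).map_sub f₁ f₂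
  simpa using this

theorem state_map_add {μ : C(X, ℝ) → ℝ} (hμ : IsLinearMap ℝ μ) (f₁ f₂ : C(X, ℝ)) :
    μ (f₁ + f₂) = μ f₁ + μ f₂ := hμ.map_add f₁ f₂

theorem state_mono' {μ : C(X, ℝ) → ℝ} (hlin : IsLinearMap ℝ μ)
    (hpos : ∀ f : C(X, ℝ), (∀ x, 0 ≤ f x) → 0 ≤ μ f) {f₁ f₂ : C(X, ℝ)}
    (h : ∀ x, f₁ x ≤ f₂ x) : μ f₁ ≤ μ f₂ := by
  have h0 : 0 ≤ μ (f₂ - f₁) := hpos _ (fun x => by simpa using sub_nonneg.2 (h x))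
  have := state_map_sub hlin f₂ f₁
  linarith [this ▸ h0]

theorem state_const {μ : C(X, ℝ) → ℝ} (hlin : IsLinearMap ℝ μ) (hone : μ 1 = 1) (c : ℝ) :
    μ (ContinuousMap.const X c) = c := by
  have : (ContinuousMap.const X c) = c • (1 : C(X, ℝ)) := by
    ext x; simp
  rw [this, hlin.map_smul, hone, smul_eq_mul, mul_one]

theorem state_bound [CompactSpace X] {μ : C(X, ℝ) → ℝ} (hlin : IsLinearMap ℝ μ)
    (hpos : ∀ f : C(X, ℝ), (∀ x, 0 ≤ f x) → 0 ≤ μ f) (hone : μ 1 = 1) (f : C(X, ℝ)) :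
    |μ f| ≤ ‖f‖ := by
  have h1 : μ f ≤ ‖f‖ := by
    have := state_mono' hlin hpos (f₁ := f) (f₂ := ContinuousMap.const X ‖f‖)
      (fun x => (abs_le.1 (by simpa using f.norm_coe_le_norm x)).2)
    rwa [state_const hlin hone] at this
  have h2 : μ (-f) ≤ ‖f‖ := by
    have := state_mono' hlin hpos (f₁ := -f) (f₂ := ContinuousMap.const X ‖f‖)
      (fun x => by
        have := (abs_le.1 (by simpa using f.norm_coe_le_norm x)).1
        simpa using by linarith)
    rwa [state_const hlin hone] at this
  have : μ (-f) = -μ f := by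
    have := state_map_sub hlin 0 f
    simpa [hlin.map_zero] using this
  rw [abs_le]; constructor <;> linarith [this ▸ h2]

theorem mem_stateSet_of [CompactSpace X] {μ : C(X, ℝ) → ℝ} (hlin : IsLinearMap ℝ μ)
    (hpos : ∀ f : C(X, ℝ), (∀ x, 0 ≤ f x) → 0 ≤ μ f) (hone : μ 1 = 1) :
    μ ∈ stateSet X := by
  refine ⟨hlin, ?_, hpos, hone⟩
  exact AddMonoidHomClass.continuous_of_bound (IsLinearMap.mk' μ hlin) 1
    (fun f => by simpa using state_bound hlin hpos hone f)

theorem state_mono {μ : C(X, ℝ) → ℝ} (hμ : μ ∈ stateSet X) {f₁ f₂ : C(X, ℝ)}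
    (h : ∀ x, f₁ x ≤ f₂ x) : μ f₁ ≤ μ f₂ := state_mono' hμ.1 hμ.2.2.1 h

theorem isClosed_stateSet [CompactSpace X] : IsClosed (stateSet X) := by
  have : stateSet X =
      ({μ : C(X, ℝ) → ℝ | ∀ a b : C(X, ℝ), μ (a + b) = μ a + μ b} ∩
        {μ | ∀ (c : ℝ) (f : C(X, ℝ)), μ (c • f) = c • μ f}) ∩
      ({μ | ∀ f : C(X, ℝ), (∀ x, 0 ≤ f x) → 0 ≤ μ f} ∩ {μ | μ 1 = 1}) := by
    ext μ
    constructor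
    · rintro ⟨hlin, _, hpos, hone⟩
      exact ⟨⟨hlin.map_add, hlin.map_smul⟩, hpos, hone⟩
    · rintro ⟨⟨hadd, hsmul⟩, hpos, hone⟩
      exact mem_stateSet_of ⟨hadd, hsmul⟩ hpos hone
  rw [this]
  have h1 : IsClosed {μ : C(X, ℝ) → ℝ | ∀ a b : C(X, ℝ), μ (a + b) = μ a + μ b} := by
    have e : {μ : C(X, ℝ) → ℝ | ∀ a b : C(X, ℝ), μ (a + b) = μ a + μ b} =
        ⋂ (a : C(X, ℝ)) (b : C(X, ℝ)), {μ : C(X, ℝ) → ℝ | μ (a + b) = μ a + μ b} := by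
      ext μ; simp
    rw [e]
    exact isClosed_iInter fun a => isClosed_iInter fun b =>
      isClosed_eq (continuous_apply (a + b)) ((continuous_apply a).add (continuous_apply b))
  have h2 : IsClosed {μ : C(X, ℝ) → ℝ | ∀ (c : ℝ) (f : C(X, ℝ)), μ (c • f) = c • μ f} := by
    have e : {μ : C(X, ℝ) → ℝ | ∀ (c : ℝ) (f : C(X, ℝ)), μ (c • f) = c • μ f} =
        ⋂ (c : ℝ) (f : C(X, ℝ)), {μ : C(X, ℝ) → ℝ | μ (c • f) = c • μ f} := by
      ext μ; simp
    rw [e]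
    exact isClosed_iInter fun c => isClosed_iInter fun f =>
      isClosed_eq (continuous_apply (c • f)) ((continuous_apply f).const_smul c)
  have h3 : IsClosed {μ : C(X, ℝ) → ℝ | ∀ f : C(X, ℝ), (∀ x, 0 ≤ f x) → 0 ≤ μ f} := by
    have e : {μ : C(X, ℝ) → ℝ | ∀ f : C(X, ℝ), (∀ x, 0 ≤ f x) → 0 ≤ μ f} =
        ⋂ (f : C(X, ℝ)) (_ : ∀ x, 0 ≤ f x), {μ : C(X, ℝ) → ℝ | 0 ≤ μ f} := by
      ext μ; simp
    rw [e]
    exact isClosed_iInter fun f => isClosed_iInter fun _ =>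
      isClosed_le continuous_const (continuous_apply f)
  have h4 : IsClosed {μ : C(X, ℝ) → ℝ | μ 1 = 1} :=
    isClosed_eq (continuous_apply 1) continuous_const
  exact (h1.inter h2).inter (h3.inter h4)

/-- The compact box containing all states. -/
def stateBox (X : Type w) [TopologicalSpace X] [CompactSpace X] : Set (C(X, ℝ) → ℝ) :=
  Set.pi Set.univ fun f : C(X, ℝ) => Set.Icc (-‖f‖) ‖f‖

theorem isCompact_stateBox [CompactSpace X] : IsCompact (stateBox X) :=
  isCompact_univ_pi fun _ => isCompact_Icc

theorem stateSet_subset_stateBox [CompactSpace X] : stateSet X ⊆ stateBox X := by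
  intro μ hμ f _
  exact abs_le.1 (state_bound hμ.1 hμ.2.2.1 hμ.2.2.2 f)

theorem dirac_mem_stateSet [CompactSpace X] (x : X) : diracState X x ∈ stateSet X :=
  mem_stateSet_of ⟨fun _ _ => rfl, fun _ _ => rfl⟩ (fun _ hf => hf x) rfl

theorem continuous_diracState : Continuous fun x : X => diracState X x :=
  continuous_pi fun f => f.continuous

theorem dirac_injective [T2Space X] [CompactSpace X] :
    Function.Injective fun x : X => diracState X x := by
  intro a b hab
  by_contra hne
  obtain ⟨f, hf0, hf1, -⟩ := exists_continuous_zero_one_of_isClosed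
    (isClosed_singleton (x := a)) (isClosed_singleton (x := b))
    (by simpa [Set.disjoint_singleton] using hne)
  have := congrFun hab f
  simp only [diracState] at this
  rw [hf0 rfl, hf1 rfl] at this
  simpa using this

/-- The set of Dirac states. -/
def diracSet (X : Type w) [TopologicalSpace X] : Set (C(X, ℝ) → ℝ) :=
  Set.range fun x : X => diracState X x

theorem isClosed_diracSet [CompactSpace X] [T2Space X] : IsClosed (diracSet X) :=
  (isCompact_range continuous_diracState).isClosed

end StateBasics
/-! ### stateSMul, pushforward and support lemmas -/

section StateAction

variable {G : Type u} [Group G] [TopologicalSpace G] [IsTopologicalGroup G]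

/-- The action by `g` as a continuous map. -/
def smulCM (F : GFlow.{u, v} G) (g : G) : C(F.X, F.X) :=
  ContinuousMap.mk (fun x => g • x) (continuous_const_smul g)

theorem stateSMul_apply (F : GFlow.{u, v} G) (g : G) (μ : C(F.X, ℝ) → ℝ) (f : C(F.X, ℝ)) :
    stateSMul F g μ f = μ (f.comp (smulCM F g)) := rfl

theorem stateSMul_one (F : GFlow.{u, v} G) (μ : C(F.X, ℝ) → ℝ) : stateSMul F 1 μ = μ := by
  funext f
  rw [stateSMul_apply]
  congr 1
  ext x
  simp [smulCM]

theorem stateSMul_mul (F : GFlow.{u, v} G) (g h : G) (μ : C(F.X, ℝ) → ℝ) :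
    stateSMul F g (stateSMul F h μ) = stateSMul F (g * h) μ := by
  funext f
  rw [stateSMul_apply, stateSMul_apply, stateSMul_apply]
  congr 1
  ext x
  simp [smulCM, mul_smul]

theorem continuous_stateSMul (F : GFlow.{u, v} G) (g : G) : Continuous (stateSMul F g) :=
  continuous_pi fun f => continuous_apply (f.comp (smulCM F g))

theorem stateSMul_mem_stateSet (F : GFlow.{u, v} G) (g : G) {μ : C(F.X, ℝ) → ℝ}
    (hμ : μ ∈ stateSet F.X) : stateSMul F g μ ∈ stateSet F.X := by
  obtain ⟨hlin, -, hpos, hone⟩ := hμ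
  refine mem_stateSet_of ⟨fun a b => ?_, fun c f => ?_⟩ (fun f hf => ?_) ?_
  · rw [stateSMul_apply, stateSMul_apply, stateSMul_apply, ContinuousMap.add_comp, hlin.map_add]
  · rw [stateSMul_apply, stateSMul_apply, ContinuousMap.smul_comp, hlin.map_smul]
  · exact hpos _ (fun x => hf _)
  · rw [stateSMul_apply, ContinuousMap.one_comp]; exact hone

theorem stateSMul_dirac (F : GFlow.{u, v} G) (g : G) (x : F.X) :
    stateSMul F g (diracState F.X x) = diracState F.X (g • x) := rfl

/-- The orbit of a functional. -/
def stateOrbit (F : GFlow.{u, v} G) (μ : C(F.X, ℝ) → ℝ) : Set (C(F.X, ℝ) → ℝ) :=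
  {ν : C(F.X, ℝ) → ℝ | ∃ g : G, ν = stateSMul F g μ}

theorem self_mem_stateOrbit (F : GFlow.{u, v} G) (μ : C(F.X, ℝ) → ℝ) : μ ∈ stateOrbit F μ :=
  ⟨1, (stateSMul_one F μ).symm⟩

theorem stateSMul_mem_closure_stateOrbit (F : GFlow.{u, v} G) (g : G) {μ ν : C(F.X, ℝ) → ℝ}
    (hν : ν ∈ closure (stateOrbit F μ)) :
    stateSMul F g ν ∈ closure (stateOrbit F μ) := by
  have himg : stateSMul F g '' stateOrbit F μ ⊆ stateOrbit F μ := by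
    rintro - ⟨ν', ⟨h, rfl⟩, rfl⟩
    exact ⟨g * h, stateSMul_mul F g h μ⟩
  have h1 : stateSMul F g ν ∈ closure (stateSMul F g '' stateOrbit F μ) :=
    image_closure_subset_closure_image (continuous_stateSMul F g) ⟨ν, hν, rfl⟩
  exact closure_mono himg h1

theorem stateOrbit_subset_closure (F : GFlow.{u, v} G) {μ ν : C(F.X, ℝ) → ℝ}
    (hν : ν ∈ closure (stateOrbit F μ)) : stateOrbit F ν ⊆ closure (stateOrbit F μ) := by
  rintro - ⟨g, rfl⟩
  exact stateSMul_mem_closure_stateOrbit F g hν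

end StateAction
/-! ### Support lemmas and pushforwards -/

section Support

variable {G : Type u} [Group G] [TopologicalSpace G] [IsTopologicalGroup G]

theorem supportedOn_mono (F : GFlow.{u, v} G) {μ : C(F.X, ℝ) → ℝ} {s t : Set F.X}
    (hst : s ⊆ t) (h : SupportedOn F μ s) : SupportedOn F μ t :=
  fun f hf hv => h f hf (fun x hx => hv x (hst hx))

theorem supportedOn_univ (F : GFlow.{u, v} G) {μ : C(F.X, ℝ) → ℝ}
    (hlin : IsLinearMap ℝ μ) : SupportedOn F μ Set.univ := by
  intro f _ hv
  have : f = 0 := by ext x; exact hv x trivial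
  rw [this]
  exact hlin.map_zero

/-- A state supported on a set is bounded by sups over the set. -/
theorem state_le_of_supported (F : GFlow.{u, v} G) {μ : C(F.X, ℝ) → ℝ}
    (hμ : μ ∈ stateSet F.X) {A : Set F.X} (hS : SupportedOn F μ A) {f : C(F.X, ℝ)} {c : ℝ}
    (h : ∀ x ∈ A, f x ≤ c) : μ f ≤ c := by
  set k : C(F.X, ℝ) := ContinuousMap.mk (fun x => max (f x - c) 0)
    ((f.continuous.sub continuous_const).max continuous_const) with hk
  have hk0 : μ k = 0 := hS k (fun x => le_max_right _ _)
    (fun x hx => max_eq_right (sub_nonpos.2 (h x hx)))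
  have hle : ∀ x, f x ≤ (ContinuousMap.const F.X c + k) x := by
    intro x
    simp only [ContinuousMap.add_apply, ContinuousMap.const_apply, hk, ContinuousMap.coe_mk]
    rcases le_or_gt (f x) c with h' | h'
    · have : (0:ℝ) ≤ max (f x - c) 0 := le_max_right _ _
      linarith
    · have : f x - c ≤ max (f x - c) 0 := le_max_left _ _
      linarith
  have := state_mono hμ hle
  rwa [state_map_add hμ.1, state_const hμ.1 hμ.2.2.2, hk0, add_zero] at this

/-- A state supported on a singleton is the Dirac state. -/
theorem state_supported_singleton (F : GFlow.{u, v} G) {μ : C(F.X, ℝ) → ℝ}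
    (hμ : μ ∈ stateSet F.X) {c : F.X} (hS : SupportedOn F μ {c}) :
    μ = diracState F.X c := by
  funext f
  have h1 : μ f ≤ f c := state_le_of_supported F hμ hS
    (fun x hx => by rw [Set.mem_singleton_iff.1 hx])
  have h2 : μ (-f) ≤ (-f) c := state_le_of_supported F hμ hS
    (fun x hx => by rw [Set.mem_singleton_iff.1 hx])
  have hneg : μ (-f) = -μ f := by
    have := state_map_sub hμ.1 0 f
    simpa [hμ.1.map_zero] using this
  rw [hneg, ContinuousMap.neg_apply] at h2
  have : f c ≤ μ f := by linarith
  exact le_antisymm h1 this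

theorem supportedOn_stateSMul (F : GFlow.{u, v} G) (g : G) {μ : C(F.X, ℝ) → ℝ} {s : Set F.X}
    (h : SupportedOn F μ s) : SupportedOn F (stateSMul F g μ) ((fun x => g • x) '' s) := by
  intro f hf hv
  refine h (f.comp (smulCM F g)) (fun x => hf _) (fun x hx => ?_)
  exact hv (g • x) ⟨x, hx, rfl⟩

/-- Intersection lemma: a state supported on two closed sets is supported on their
intersection. -/
theorem supportedOn_inter (F : GFlow.{u, v} G) {μ : C(F.X, ℝ) → ℝ}
    (hμ : μ ∈ stateSet F.X) {A B : Set F.X} (hA : IsClosed A) (hB : IsClosed B)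
    (hSA : SupportedOn F μ A) (hSB : SupportedOn F μ B) : SupportedOn F μ (A ∩ B) := by
  intro f hf hv
  refine le_antisymm (le_of_forall_pos_le_add fun ε hε => ?_) (hμ.2.2.1 f hf)
  have hFc : IsClosed (f ⁻¹' Set.Ici ε) := isClosed_Ici.preimage f.continuous
  -- first Urysohn function: 0 on B, 1 on A ∩ {f ≥ ε}
  obtain ⟨gu, hg0, hg1, hg01⟩ := exists_continuous_zero_one_of_isClosed hB
    (hA.inter hFc) (by
      rw [Set.disjoint_left]
      rintro x hxB ⟨hxA, hxF⟩
      have := hv x ⟨hxA, hxB⟩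
      have : (0:ℝ) < f x := lt_of_lt_of_le hε hxF
      simp_all)
  -- second Urysohn function: 0 on A, 1 on {f ≥ ε} ∩ {gu ≤ 1/2}
  obtain ⟨ku, hk0, hk1, hk01⟩ := exists_continuous_zero_one_of_isClosed hA
    (hFc.inter ((isClosed_Iic (a := (1:ℝ)/2)).preimage gu.continuous)) (by
      rw [Set.disjoint_left]
      rintro x hxA ⟨hxF, hxg⟩
      have : gu x = 1 := hg1 ⟨hxA, hxF⟩
      have : gu x ≤ 1/2 := hxg
      linarith [hg1 (Set.mem_inter hxA hxF)])
  have hgu0 : μ gu = 0 := hSB gu (fun x => (hg01 x).1) (fun x hx => hg0 hx)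
  have hku0 : μ ku = 0 := hSA ku (fun x => (hk01 x).1) (fun x hx => hk0 hx)
  set u : C(F.X, ℝ) := ContinuousMap.const F.X ε + ‖f‖ • ((2:ℝ) • gu + ku) with hu
  have hle : ∀ x, f x ≤ u x := by
    intro x
    have hfle : f x ≤ ‖f‖ := (abs_le.1 (by simpa using f.norm_coe_le_norm x)).2
    have hfn : (0:ℝ) ≤ ‖f‖ := norm_nonneg f
    have hg01x := hg01 x
    have hk01x := hk01 x
    simp only [hu, ContinuousMap.add_apply, ContinuousMap.const_apply,
      ContinuousMap.smul_apply, smul_eq_mul] at *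
    rcases lt_or_ge (f x) ε with h' | h'
    · nlinarith [hg01x.1, hk01x.1]
    · rcases le_or_gt (1/2 : ℝ) (gu x) with h2 | h2
      · nlinarith [hk01x.1, hg01x.2]
      · have hk1x : ku x = 1 := hk1 ⟨h', le_of_lt h2⟩
        nlinarith [hg01x.1]
  have := state_mono hμ hle
  have heval : μ u = ε + ‖f‖ * (2 * μ gu + μ ku) := by
    rw [hu, state_map_add hμ.1, state_const hμ.1 hμ.2.2.2, hμ.1.map_smul,
      state_map_add hμ.1, hμ.1.map_smul, smul_eq_mul, smul_eq_mul]
  rw [heval, hgu0, hku0] at this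
  linarith

end Support

section Push

variable {G : Type u} [Group G] [TopologicalSpace G] [IsTopologicalGroup G]

/-- Pushforward of a functional along a continuous map. -/
def pushFn {X : Type v} {Y : Type w} [TopologicalSpace X] [TopologicalSpace Y]
    (π : C(X, Y)) (μ : C(X, ℝ) → ℝ) : C(Y, ℝ) → ℝ :=
  fun f => μ (f.comp π)

theorem continuous_pushFn {X : Type v} {Y : Type w} [TopologicalSpace X] [TopologicalSpace Y]
    (π : C(X, Y)) : Continuous (pushFn π) :=
  continuous_pi fun f => continuous_apply (f.comp π)

theorem pushFn_dirac {X : Type v} {Y : Type w} [TopologicalSpace X] [TopologicalSpace Y]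
    (π : C(X, Y)) (x : X) : pushFn π (diracState X x) = diracState Y (π x) := rfl

theorem pushFn_mem_stateSet {X : Type v} {Y : Type w} [TopologicalSpace X] [TopologicalSpace Y]
    [CompactSpace Y] (π : C(X, Y)) {μ : C(X, ℝ) → ℝ} (hμ : μ ∈ stateSet X) :
    pushFn π μ ∈ stateSet Y := by
  obtain ⟨hlin, -, hpos, hone⟩ := hμ
  refine mem_stateSet_of ⟨fun a b => ?_, fun c f => ?_⟩ (fun f hf => ?_) ?_
  · show μ ((a + b).comp π) = _
    rw [ContinuousMap.add_comp, hlin.map_add]; rfl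
  · show μ ((c • f).comp π) = _
    rw [ContinuousMap.smul_comp, hlin.map_smul]; rfl
  · exact hpos _ (fun x => hf _)
  · show μ ((1 : C(Y, ℝ)).comp π) = 1
    rw [ContinuousMap.one_comp]; exact hone

theorem pushFn_stateSMul {F₁ : GFlow.{u, v} G} {F₂ : GFlow.{u, w} G} (π : C(F₁.X, F₂.X))
    (hπ : ∀ (g : G) (x : F₁.X), π (g • x) = g • π x) (g : G) (μ : C(F₁.X, ℝ) → ℝ) :
    pushFn π (stateSMul F₁ g μ) = stateSMul F₂ g (pushFn π μ) := by
  funext f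
  show μ ((f.comp π).comp (smulCM F₁ g)) = μ ((f.comp (smulCM F₂ g)).comp π)
  congr 1
  ext x
  simp [smulCM, hπ]

theorem supportedOn_pushFn {F₁ : GFlow.{u, v} G} {F₂ : GFlow.{u, w} G} (π : C(F₁.X, F₂.X))
    {μ : C(F₁.X, ℝ) → ℝ} {s : Set F₂.X} (h : SupportedOn F₁ μ (π ⁻¹' s)) :
    SupportedOn F₂ (pushFn π μ) s :=
  fun f hf hv => h (f.comp π) (fun x => hf _) (fun x hx => hv _ hx)

theorem pushFn_mem_closure_stateOrbit {F₁ : GFlow.{u, v} G} {F₂ : GFlow.{u, w} G}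
    (π : C(F₁.X, F₂.X)) (hπ : ∀ (g : G) (x : F₁.X), π (g • x) = g • π x)
    {μ ν : C(F₁.X, ℝ) → ℝ} (hν : ν ∈ closure (stateOrbit F₁ μ)) :
    pushFn π ν ∈ closure (stateOrbit F₂ (pushFn π μ)) := by
  have himg : pushFn π '' stateOrbit F₁ μ ⊆ stateOrbit F₂ (pushFn π μ) := by
    rintro - ⟨ν', ⟨g, rfl⟩, rfl⟩
    exact ⟨g, pushFn_stateSMul π hπ g μ⟩
  have h1 : pushFn π ν ∈ closure (pushFn π '' stateOrbit F₁ μ) :=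
    image_closure_subset_closure_image (continuous_pushFn π) ⟨ν, hν, rfl⟩
  exact closure_mono himg h1

/-- If the pushforward of a state is a Dirac state, the state is supported on the fiber. -/
theorem supportedOn_fiber_of_pushFn_dirac {F₁ : GFlow.{u, v} G} {F₂ : GFlow.{u, w} G}
    (π : C(F₁.X, F₂.X)) {μ : C(F₁.X, ℝ) → ℝ} (hμ : μ ∈ stateSet F₁.X) {c : F₂.X}
    (h : pushFn π μ = diracState F₂.X c) : SupportedOn F₁ μ (π ⁻¹' {c}) := by
  intro f hf hv
  refine le_antisymm (le_of_forall_pos_le_add fun ε hε => ?_) (hμ.2.2.1 f hf)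
  set F : Set F₁.X := f ⁻¹' Set.Ici ε with hF
  have hFc : IsClosed F := isClosed_Ici.preimage f.continuous
  have hFcpt : IsCompact (π '' F) := (hFc.isCompact).image π.continuous
  obtain ⟨hu, hu0, hu1, hu01⟩ := exists_continuous_zero_one_of_isClosed
    (isClosed_singleton (x := c)) hFcpt.isClosed (by
      rw [Set.disjoint_left]
      rintro x rfl ⟨z, hzF, hzc⟩
      have h1 : ε ≤ f z := hzF
      have h2 : f z = 0 := hv z (by simpa using hzc.symm ▸ rfl)
      linarith)
  have hle : ∀ x, f x ≤ (ContinuousMap.const F₁.X ε + ‖f‖ • (hu.comp π)) x := by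
    intro x
    have hfle : f x ≤ ‖f‖ := (abs_le.1 (by simpa using f.norm_coe_le_norm x)).2
    have hfn : (0:ℝ) ≤ ‖f‖ := norm_nonneg f
    have h01 := hu01 (π x)
    simp only [ContinuousMap.add_apply, ContinuousMap.const_apply, ContinuousMap.smul_apply,
      ContinuousMap.comp_apply, smul_eq_mul]
    rcases lt_or_ge (f x) ε with h' | h'
    · nlinarith [h01.1]
    · have : hu (π x) = 1 := hu1 ⟨x, h', rfl⟩
      rw [this]
      linarith
  have := state_mono hμ hle
  have heval : μ (ContinuousMap.const F₁.X ε + ‖f‖ • (hu.comp π)) = ε + ‖f‖ * μ (hu.comp π) := by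
    rw [state_map_add hμ.1, state_const hμ.1 hμ.2.2.2, hμ.1.map_smul, smul_eq_mul]
  have hpush : μ (hu.comp π) = 0 := by
    have : pushFn π μ hu = diracState F₂.X c hu := by rw [h]
    simpa [pushFn, diracState, hu0 rfl] using this
  rw [heval, hpush, mul_zero, add_zero] at this
  linarith
/-! ### Ultrafilter tools -/

section UFTools

theorem exists_ultrafilter_tendsto {α : Type v} {β : Type w} [TopologicalSpace β]
    (m : α → β) {b : β} (hb : b ∈ closure (Set.range m)) :
    ∃ 𝒰 : Ultrafilter α, Filter.Tendsto m 𝒰 (nhds b) := by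
  obtain ⟨𝒱, hmem, hle⟩ := mem_closure_iff_ultrafilter.1 hb
  haveI : (Filter.comap m ↑𝒱).NeBot := by
    refine Filter.comap_neBot fun t ht => ?_
    obtain ⟨y, ⟨a, rfl⟩, hyt⟩ := 𝒱.nonempty_of_mem (Filter.inter_mem hmem ht)
    exact ⟨a, hyt⟩
  refine ⟨Ultrafilter.of (Filter.comap m ↑𝒱), ?_⟩
  exact le_trans (le_trans (Filter.map_mono (Ultrafilter.of_le _)) Filter.map_comap_le) hle

/-- Every ultrafilter of functionals eventually consisting of states converges to a state. -/
theorem ultrafilter_limit_state {X : Type w} [TopologicalSpace X] [CompactSpace X]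
    {α : Type v} (𝒰 : Ultrafilter α) {ν : α → C(X, ℝ) → ℝ}
    (hν : ∀ᶠ a in (𝒰 : Filter α), ν a ∈ stateSet X) :
    ∃ L ∈ stateSet X, Filter.Tendsto ν 𝒰 (nhds L) := by
  have hbox : ↑(𝒰.map ν) ≤ Filter.principal (stateBox X) := by
    rw [Filter.le_principal_iff]
    exact Filter.mem_map.2 (hν.mono fun a ha => stateSet_subset_stateBox ha)
  obtain ⟨L, -, hL⟩ := isCompact_stateBox.ultrafilter_le_nhds (𝒰.map ν) hbox
  exact ⟨L, isClosed_stateSet.mem_of_tendsto hL hν, hL⟩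

theorem ultrafilter_limit_point {X : Type w} [TopologicalSpace X] [CompactSpace X] [Nonempty X]
    {α : Type v} (𝒰 : Ultrafilter α) (p : α → X) :
    ∃ L : X, Filter.Tendsto p 𝒰 (nhds L) := by
  obtain ⟨L, -, hL⟩ := isCompact_univ.ultrafilter_le_nhds (𝒰.map p)
    (by rw [Filter.le_principal_iff]; exact Filter.univ_mem' fun a => trivial)
  exact ⟨L, hL⟩

end UFTools

section FiberSupported

variable {G : Type u} [Group G] [TopologicalSpace G] [IsTopologicalGroup G]

/-- The set of states supported on some fiber of `φ` is closed. -/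
theorem isClosed_fiberSupported (F : GFlow.{u, v} G) (Y : GFlow.{u, w} G) (φ : C(F.X, Y.X)) :
    IsClosed {μ : C(F.X, ℝ) → ℝ |
      μ ∈ stateSet F.X ∧ ∃ y : Y.X, SupportedOn F μ (φ ⁻¹' {y})} := by
  set S := {μ : C(F.X, ℝ) → ℝ | μ ∈ stateSet F.X ∧ ∃ y : Y.X, SupportedOn F μ (φ ⁻¹' {y})}
  rw [← closure_subset_iff_isClosed]
  intro ν hν
  obtain ⟨𝒱, hmem, hle⟩ := mem_closure_iff_ultrafilter.1 hν
  have hstate : ν ∈ stateSet F.X :=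
    isClosed_stateSet.mem_of_tendsto hle (Filter.eventually_of_mem hmem fun μ hμ => hμ.1)
  classical
  set Θ : (C(F.X, ℝ) → ℝ) → Y.X := fun μ =>
    if h : ∃ y : Y.X, SupportedOn F μ (φ ⁻¹' {y}) then h.choose else Classical.arbitrary Y.X
  obtain ⟨ystar, hy⟩ := ultrafilter_limit_point 𝒱 Θ
  refine ⟨hstate, ystar, fun f hf hv => ?_⟩
  have hpos : (0:ℝ) ≤ ν f := hstate.2.2.1 f hf
  refine le_antisymm ?_ hpos
  have key : ∀ ε > (0:ℝ), ν f ≤ 0 + ε := by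
    intro ε hε
    have hUc : IsCompact {x : F.X | ε ≤ f x} := (isClosed_le continuous_const f.continuous).isCompact
    have himg : IsClosed (φ '' {x : F.X | ε ≤ f x}) := (hUc.image φ.continuous).isClosed
    have hyV : ystar ∈ (φ '' {x : F.X | ε ≤ f x})ᶜ := by
      rintro ⟨x, hx, hφx⟩
      have := hv x (by simp [hφx])
      have : ε ≤ (0:ℝ) := le_of_le_of_eq hx this
      linarith
    have hev1 : ∀ᶠ μ in (𝒱 : Filter (C(F.X, ℝ) → ℝ)), Θ μ ∈ (φ '' {x : F.X | ε ≤ f x})ᶜ :=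
      hy (himg.isOpen_compl.mem_nhds hyV)
    have hev2 : ∀ᶠ μ in (𝒱 : Filter (C(F.X, ℝ) → ℝ)), μ ∈ S := Filter.eventually_of_mem hmem fun μ h => h
    have hev : ∀ᶠ μ in (𝒱 : Filter (C(F.X, ℝ) → ℝ)), μ f ≤ ε := by
      filter_upwards [hev1, hev2] with μ h1 h2
      have hex : ∃ y : Y.X, SupportedOn F μ (φ ⁻¹' {y}) := h2.2
      have hsup : SupportedOn F μ (φ ⁻¹' {Θ μ}) := by
        have : Θ μ = hex.choose := by simp only [Θ]; rw [dif_pos hex]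
        rw [this]
        exact hex.choose_spec
      refine state_le_of_supported F h2.1 hsup fun x hx => ?_
      by_contra hlt
      push_neg at hlt
      exact h1 ⟨x, le_of_lt hlt, hx⟩
    have hlim : Filter.Tendsto (fun μ => μ f) (𝒱 : Filter (C(F.X, ℝ) → ℝ)) (nhds (ν f)) :=
      ((continuous_apply f).tendsto ν).comp hle
    simpa using le_of_tendsto hlim hev
  exact le_of_forall_pos_le_add key

end FiberSupported
/-! ### Flows: minimal subflows, subflow construction, rigidity -/

section Flows

variable {G : Type u} [Group G] [TopologicalSpace G] [IsTopologicalGroup G]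

theorem isSubflow_univ (F : GFlow.{u, v} G) : IsSubflow F Set.univ :=
  ⟨Set.univ_nonempty, isClosed_univ, fun _ _ _ => trivial⟩

theorem exists_minimal_subflow (F : GFlow.{u, v} G) :
    ∃ M : Set F.X, IsSubflow F M ∧ ∀ C : Set F.X, C ⊆ M → IsSubflow F C → C = M := by
  obtain ⟨M, -, hMS, hMmin⟩ := zorn_superset_nonempty {C : Set F.X | IsSubflow F C}
    (fun c hcS hchain hcne => by
      haveI : Nonempty c := hcne.to_subtype
      have hdir : Directed (· ⊇ ·) (fun i : c => (i : Set F.X)) := by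
        intro i j
        rcases hchain.total i.2 j.2 with h | h
        · exact ⟨i, le_refl _, h⟩
        · exact ⟨j, h, le_refl _⟩
      have hne := IsCompact.nonempty_iInter_of_directed_nonempty_isCompact_isClosed
        (fun i : c => (i : Set F.X)) hdir (fun i => (hcS i.2).1)
        (fun i => (hcS i.2).2.1.isCompact) (fun i => (hcS i.2).2.1)
      refine ⟨⋂ i : c, (i : Set F.X), ⟨hne, isClosed_iInter fun i => (hcS i.2).2.1,
        fun g x hx => Set.mem_iInter.2 fun i => (hcS i.2).2.2 g x (Set.mem_iInter.1 hx i)⟩,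
        fun s hs => Set.iInter_subset _ (⟨s, hs⟩ : c)⟩)
    Set.univ (isSubflow_univ F)
  exact ⟨M, hMS, fun C hCM hC => le_antisymm hCM (hMmin hC hCM)⟩

/-- The multiplicative action on an invariant subset. -/
def subMulAction (F : GFlow.{u, v} G) (M : Set F.X)
    (hinv : ∀ g : G, ∀ x ∈ M, g • x ∈ M) : MulAction G M where
  smul := fun g x => ⟨g • (x : F.X), hinv g x x.2⟩
  one_smul := fun x => Subtype.ext (one_smul G (x : F.X))
  mul_smul := fun g h x => Subtype.ext (mul_smul g h (x : F.X))

/-- The subflow as a `GFlow`. -/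
def GFlow.sub (F : GFlow.{u, v} G) (M : Set F.X) (hM : IsSubflow F M) : GFlow.{u, v} G :=
  letI i1 : MulAction G M := subMulAction F M hM.2.2
  letI i2 : CompactSpace M := isCompact_iff_compactSpace.mp hM.2.1.isCompact
  haveI i3 : Nonempty M := hM.1.to_subtype
  letI i4 : ContinuousSMul G M := ⟨(continuous_fst.smul
    (continuous_subtype_val.comp continuous_snd)).subtype_mk
      fun p : G × M => hM.2.2 p.1 p.2 p.2.2⟩
  GFlow.mk (X := M)

theorem GFlow.sub_X (F : GFlow.{u, v} G) (M : Set F.X) (hM : IsSubflow F M) :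
    (F.sub M hM).X = M := rfl

theorem GFlow.sub_smul_coe (F : GFlow.{u, v} G) (M : Set F.X) (hM : IsSubflow F M)
    (g : G) (x : (F.sub M hM).X) : Subtype.val (g • x) = g • Subtype.val x := rfl

theorem GFlow.sub_val_isGMap (F : GFlow.{u, v} G) (M : Set F.X) (hM : IsSubflow F M) :
    IsGMap (F.sub M hM) F (Subtype.val) :=
  ⟨continuous_subtype_val, fun _ _ => rfl⟩

theorem GFlow.sub_isMinimal (F : GFlow.{u, v} G) (M : Set F.X) (hM : IsSubflow F M)
    (hmin : ∀ C : Set F.X, C ⊆ M → IsSubflow F C → C = M) : (F.sub M hM).IsMinimal := by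
  intro C hC
  have himg : IsSubflow F (Subtype.val '' C) := by
    refine ⟨hC.1.image _, ?_, ?_⟩
    · have : IsCompact (Subtype.val '' C) :=
        (hC.2.1.isCompact).image continuous_subtype_val
      exact this.isClosed
    · rintro g - ⟨x, hx, rfl⟩
      exact ⟨_, hC.2.2 g x hx, rfl⟩
  have hsub : Subtype.val '' C ⊆ M := by rintro - ⟨x, -, rfl⟩; exact x.2
  have heq := hmin _ hsub himg
  rw [Set.eq_univ_iff_forall]
  intro x
  have hxM : Subtype.val x ∈ Subtype.val '' C := by rw [heq]; exact x.2
  obtain ⟨c, hc, hcx⟩ := hxM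
  rwa [show c = x from Subtype.ext hcx] at hc

/-- The image of a flow under a `G`-map to a minimal flow is everything. -/
theorem surjective_of_isGMap_minimal {F₁ : GFlow.{u, v} G} {F₂ : GFlow.{u, w} G}
    {f : F₁.X → F₂.X} (hf : IsGMap F₁ F₂ f) (hmin : F₂.IsMinimal) :
    Function.Surjective f := by
  have : IsSubflow F₂ (Set.range f) := by
    refine ⟨Set.range_nonempty f, ?_, ?_⟩
    · have : IsCompact (Set.range f) := isCompact_range hf.1
      exact this.isClosed
    · rintro g - ⟨x, rfl⟩
      exact ⟨g • x, hf.2 g x⟩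
  intro y
  have := hmin _ this
  have : y ∈ Set.range f := this ▸ Set.mem_univ y
  exact this

/-- Orbits are dense in a minimal flow. -/
theorem dense_orbit {F : GFlow.{u, v} G} (hmin : F.IsMinimal) (x : F.X) :
    closure (Set.range fun g : G => g • x) = Set.univ := by
  refine hmin _ ⟨?_, isClosed_closure, ?_⟩
  · exact ⟨x, subset_closure ⟨1, one_smul G x⟩⟩
  · intro g y hy
    have h1 : (g • ·) '' Set.range (fun g : G => g • x) ⊆ Set.range (fun g : G => g • x) := by
      rintro - ⟨-, ⟨h, rfl⟩, rfl⟩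
      exact ⟨g * h, mul_smul g h x⟩
    have h2 : g • y ∈ (g • ·) '' closure (Set.range fun g : G => g • x) := ⟨y, hy, rfl⟩
    exact closure_mono h1 (image_closure_subset_closure_image (continuous_const_smul g) h2)

/-- Rigidity: an endomorphism over the base of a strongly proximal extension of a minimal
flow is the identity. -/
theorem eq_id_of_gmap_over {F : GFlow.{u, v} G} {Y : GFlow.{u, w} G} {φ : F.X → Y.X}
    (hmin : F.IsMinimal) (hsp : IsStronglyProximalExt F Y φ) {e : F.X → F.X}
    (he : IsGMap F F e) (hcomm : ∀ x, φ (e x) = φ x) : ∀ x, e x = x := by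
  suffices hne : ∃ z : F.X, e z = z by
    obtain ⟨z, hz⟩ := hne
    have hsub : IsSubflow F {x : F.X | e x = x} :=
      ⟨⟨z, hz⟩, isClosed_eq he.1 continuous_id, fun g x hx => by
        show e (g • x) = g • x
        rw [he.2 g x, hx]⟩
    intro x
    exact (Set.eq_univ_iff_forall.1 (hmin _ hsub)) x
  obtain ⟨x₀⟩ := (inferInstance : Nonempty F.X)
  set μ : C(F.X, ℝ) → ℝ := fun f => (f x₀ + f (e x₀)) / 2 with hμdef
  have hμstate : μ ∈ stateSet F.X := by
    refine mem_stateSet_of ⟨fun a b => ?_, fun c f => ?_⟩ (fun f hf => ?_) ?_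
    · simp only [hμdef, ContinuousMap.add_apply]; ring
    · simp only [hμdef, ContinuousMap.smul_apply, smul_eq_mul]; ring
    · simp only [hμdef]; have := hf x₀; have := hf (e x₀); linarith
    · simp [hμdef]
  have hμsupp : SupportedOn F μ (φ ⁻¹' {φ x₀}) := by
    intro f hf hv
    have h1 : f x₀ = 0 := hv x₀ rfl
    have h2 : f (e x₀) = 0 := hv (e x₀) (hcomm x₀)
    simp [hμdef, h1, h2]
  obtain ⟨z, hz⟩ := hsp.2 (φ x₀) μ hμstate hμsupp
  have hrange : {ν : C(F.X, ℝ) → ℝ | ∃ g : G, ν = stateSMul F g μ} =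
      Set.range fun g : G => stateSMul F g μ := by
    ext ν; exact ⟨fun ⟨g, h⟩ => ⟨g, h.symm⟩, fun ⟨g, h⟩ => ⟨g, h.symm⟩⟩
  rw [hrange] at hz
  obtain ⟨𝒰, h𝒰⟩ := exists_ultrafilter_tendsto _ hz
  obtain ⟨p, hp⟩ := ultrafilter_limit_point 𝒰 (fun g : G => g • x₀)
  obtain ⟨q, hq⟩ := ultrafilter_limit_point 𝒰 (fun g : G => g • e x₀)
  have heval : ∀ f : C(F.X, ℝ), (f p + f q) / 2 = f z := by
    intro f
    have h1 : Filter.Tendsto (fun g : G => stateSMul F g μ f) 𝒰 (nhds (diracState F.X z f)) :=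
      ((continuous_apply f).tendsto _).comp h𝒰
    have h2 : Filter.Tendsto (fun g : G => (f (g • x₀) + f (g • e x₀)) / 2) 𝒰
        (nhds ((f p + f q) / 2)) :=
      (((f.continuous.tendsto p).comp hp).add ((f.continuous.tendsto q).comp hq)).div_const 2
    have : (fun g : G => stateSMul F g μ f) = fun g : G => (f (g • x₀) + f (g • e x₀)) / 2 := rfl
    rw [this] at h1
    exact tendsto_nhds_unique h2 h1
  have hpz : p = z := by
    by_contra hne
    obtain ⟨f, hf0, hf1, hf01⟩ := exists_continuous_zero_one_of_isClosed
      (isClosed_singleton (x := z)) (isClosed_singleton (x := p))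
      (by simpa [Set.disjoint_singleton] using fun h => hne h.symm)
    have h3 := heval f
    rw [hf0 rfl, hf1 rfl] at h3
    simp only [Pi.one_apply, Pi.zero_apply] at h3
    have := (hf01 q).1
    linarith
  have hqz : q = z := by
    by_contra hne
    obtain ⟨f, hf0, hf1, hf01⟩ := exists_continuous_zero_one_of_isClosed
      (isClosed_singleton (x := z)) (isClosed_singleton (x := q))
      (by simpa [Set.disjoint_singleton] using fun h => hne h.symm)
    have h3 := heval f
    rw [hf0 rfl, hf1 rfl] at h3
    simp only [Pi.one_apply, Pi.zero_apply] at h3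
    have := (hf01 p).1
    linarith
  have hepq : e p = q := by
    have h1 : Filter.Tendsto (fun g : G => e (g • x₀)) 𝒰 (nhds (e p)) :=
      (he.1.tendsto p).comp hp
    have h2 : (fun g : G => e (g • x₀)) = fun g : G => g • e x₀ := by
      funext g; exact he.2 g x₀
    rw [h2] at h1
    exact tendsto_nhds_unique h1 hq
  exact ⟨z, by rw [← hpz, hepq, hqz]; exact hpz.symm⟩

end Flows
/-! ### Strong proximality passes to minimal subflows -/

section SubflowSP

variable {G : Type u} [Group G] [TopologicalSpace G] [IsTopologicalGroup G]

theorem isClosed_supportedOn (F : GFlow.{u, v} G) (M : Set F.X) :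
    IsClosed {ν : C(F.X, ℝ) → ℝ | SupportedOn F ν M} := by
  have : {ν : C(F.X, ℝ) → ℝ | SupportedOn F ν M} =
      ⋂ (f : C(F.X, ℝ)) (_ : ∀ x, 0 ≤ f x) (_ : ∀ x ∈ M, f x = 0),
        {ν : C(F.X, ℝ) → ℝ | ν f = 0} := by
    ext ν
    simp only [Set.mem_iInter, Set.mem_setOf_eq]
    rfl
  rw [this]
  exact isClosed_iInter fun f => isClosed_iInter fun _ => isClosed_iInter fun _ =>
    isClosed_eq (continuous_apply f) continuous_const

/-- If `φ : F → Y` is strongly proximal and `M` is a subflow of `F` mapping onto `Y`, then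
the restriction of `φ` to `M` is strongly proximal. -/
theorem isStronglyProximalExt_sub {F : GFlow.{u, v} G} {Y : GFlow.{u, w} G} {φ : F.X → Y.X}
    (hφ : IsStronglyProximalExt F Y φ) (M : Set F.X) (hM : IsSubflow F M)
    (hsurj : Function.Surjective fun x : (F.sub M hM).X => φ (Subtype.val x)) :
    IsStronglyProximalExt (F.sub M hM) Y (fun x => φ (Subtype.val x)) := by
  have hφc : Continuous φ := hφ.1.1.1
  constructor
  · exact ⟨⟨hφc.comp continuous_subtype_val, fun g x => by
      show φ (Subtype.val (g • x)) = g • φ (Subtype.val x)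
      rw [GFlow.sub_smul_coe, hφ.1.1.2]⟩, hsurj⟩
  intro y μ hμ hsupp
  set ι : C((F.sub M hM).X, F.X) := ContinuousMap.mk Subtype.val continuous_subtype_val with hι
  have hιG : ∀ (g : G) (x : (F.sub M hM).X), ι (g • x) = g • ι x := fun g x => rfl
  set μ' := pushFn ι μ with hμ'
  have hμ'state : μ' ∈ stateSet F.X := pushFn_mem_stateSet ι hμ
  have hμ'supp : SupportedOn F μ' (φ ⁻¹' {y}) :=
    supportedOn_pushFn ι (by exact hsupp)
  obtain ⟨x, hx⟩ := hφ.2 y μ' hμ'state hμ'supp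
  -- x lies in M
  have hTclosed : IsClosed {ν : C(F.X, ℝ) → ℝ | SupportedOn F ν M} := isClosed_supportedOn F M
  have horb : {ν : C(F.X, ℝ) → ℝ | ∃ g : G, ν = stateSMul F g μ'} ⊆
      {ν : C(F.X, ℝ) → ℝ | SupportedOn F ν M} := by
    rintro - ⟨g, rfl⟩
    have hsuppM : SupportedOn F μ' M := by
      intro f hf hv
      have : f.comp ι = 0 := by
        ext x
        exact hv (Subtype.val x) x.2
      show μ (f.comp ι) = 0
      rw [this]
      exact hμ.1.map_zero
    have := supportedOn_stateSMul F g hsuppM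
    refine supportedOn_mono F ?_ this
    rintro - ⟨w, hw, rfl⟩
    exact hM.2.2 g w hw
  have hxM : x ∈ M := by
    have hd : SupportedOn F (diracState F.X x) M :=
      closure_minimal horb hTclosed hx
    by_contra hxM
    obtain ⟨f, hf0, hf1, hf01⟩ := exists_continuous_zero_one_of_isClosed hM.2.1
      (isClosed_singleton (x := x)) (by simpa [Set.disjoint_singleton_right] using hxM)
    have := hd f (fun w => (hf01 w).1) (fun w hw => hf0 hw)
    rw [show diracState F.X x f = f x from rfl, hf1 rfl] at this
    simpa using this
  refine ⟨⟨x, hxM⟩, ?_⟩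
  -- transfer Dirac convergence to the subflow via Tietze extensions
  rw [mem_closure_iff]
  intro O hO hdO
  obtain ⟨I, u, hIu, hpi⟩ := isOpen_pi_iff.1 hO _ hdO
  classical
  -- Tietze extensions of the finitely many coordinates
  have hext : ∀ f : C((F.sub M hM).X, ℝ), ∃ Ff : C(F.X, ℝ), ∀ w : (F.sub M hM).X,
      Ff (Subtype.val w) = f w := by
    intro f
    obtain ⟨Ff, hFf⟩ := ContinuousMap.exists_restrict_eq (Y := ℝ) hM.2.1 f
    exact ⟨Ff, fun w => by
      have := congrArg (fun h => h w) hFf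
      exact this⟩
  choose Ext hExt using hext
  set V : Set (C(F.X, ℝ) → ℝ) := ⋂ f ∈ I, {ν : C(F.X, ℝ) → ℝ | ν (Ext f) ∈ u f} with hV
  have hVopen : IsOpen V := isOpen_biInter_finset fun f hf =>
    (hIu f hf).1.preimage (continuous_apply (Ext f))
  have hdV : diracState F.X x ∈ V := by
    refine Set.mem_iInter₂.2 fun f hf => ?_
    have : diracState F.X x (Ext f) = f ⟨x, hxM⟩ := hExt f ⟨x, hxM⟩
    rw [Set.mem_setOf_eq, this]
    exact (hIu f hf).2
  obtain ⟨ν₀, hν₀V, g, hgν₀⟩ := mem_closure_iff.1 hx V hVopen hdV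
  refine ⟨stateSMul (F.sub M hM) g μ, hpi ?_, g, rfl⟩
  intro f hf
  have hkey : stateSMul (F.sub M hM) g μ f = stateSMul F g μ' (Ext f) := by
    show μ (f.comp (smulCM (F.sub M hM) g)) = μ (((Ext f).comp (smulCM F g)).comp ι)
    congr 1
    ext w
    show f (g • w) = Ext f (g • Subtype.val w)
    rw [← GFlow.sub_smul_coe F M hM g w, hExt f (g • w)]
  rw [hkey, ← hgν₀]
  exact Set.mem_iInter₂.1 hν₀V f hf

end SubflowSP
/-! ### The fiber product of strongly proximal extensions -/

section FiberProd

variable {G : Type u} [Group G] [TopologicalSpace G] [IsTopologicalGroup G]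

theorem supportedOn_biInter_finset (F : GFlow.{u, v} G) {ν : C(F.X, ℝ) → ℝ}
    (hν : IsLinearMap ℝ ν) {β : Type w} {T : β → Set F.X} (hTc : ∀ j, IsClosed (T j))
    (hν' : ν ∈ stateSet F.X) (hTs : ∀ j, SupportedOn F ν (T j)) (u : Finset β) :
    SupportedOn F ν (⋂ j ∈ u, T j) ∧ IsClosed (⋂ j ∈ u, T j) := by
  classical
  induction u using Finset.induction_on with
  | empty =>
    have he : (⋂ j ∈ (∅ : Finset β), T j) = Set.univ := by simp
    rw [he]
    exact ⟨supportedOn_univ F hν, isClosed_univ⟩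
  | insert _ _ ha ih =>
    rw [Finset.set_biInter_insert]
    exact ⟨supportedOn_inter F hν' (hTc _) ih.2 (hTs _) ih.1, (hTc _).inter ih.2⟩

variable (Y : GFlow.{u, v} G) {ι : Type (max u v)} (Z : ι → GFlow.{u, max u v} G)

/-- The product flow `Y × ∏ᵢ Zᵢ`. -/
def prodFlow : GFlow.{u, max u v} G := GFlow.mk (X := Y.X × ∀ i, (Z i).X)

variable (ψ : ∀ i, (Z i).X → Y.X)

/-- The fiber product over `Y`. -/
def fppSet : Set (prodFlow Y Z).X := {p : Y.X × ∀ i, (Z i).X | ∀ i, ψ i (p.2 i) = p.1}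

theorem isSubflow_fppSet (hc : ∀ i, Continuous (ψ i))
    (he : ∀ i, ∀ (g : G) (z : (Z i).X), ψ i (g • z) = g • ψ i z)
    (hs : ∀ i, Function.Surjective (ψ i)) : IsSubflow (prodFlow Y Z) (fppSet Y Z ψ) := by
  refine ⟨?_, ?_, ?_⟩
  · obtain ⟨y⟩ := (inferInstance : Nonempty Y.X)
    exact ⟨(y, fun i => (hs i y).choose), fun i => (hs i y).choose_spec⟩
  · have : fppSet Y Z ψ = ⋂ i, {p : Y.X × ∀ i, (Z i).X | ψ i (p.2 i) = p.1} := by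
      exact Set.ext fun p => ⟨fun h => Set.mem_iInter.2 h, fun h i => Set.mem_iInter.1 h i⟩
    rw [this]
    exact isClosed_iInter fun i => isClosed_eq
      ((hc i).comp ((continuous_apply i).comp continuous_snd)) continuous_fst
  · intro g p hp i
    show ψ i (g • p.2 i) = g • p.1
    rw [he i g (p.2 i), hp i]

/-- The key theorem: the fiber product of strongly proximal extensions is a strongly
proximal extension. -/
theorem isStronglyProximalExt_fpp (hψ : ∀ i, IsStronglyProximalExt (Z i) Y (ψ i))
    (hsub : IsSubflow (prodFlow Y Z) (fppSet Y Z ψ)) :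
    IsStronglyProximalExt ((prodFlow Y Z).sub (fppSet Y Z ψ) hsub) Y
      (fun p => (Subtype.val p).1) := by
  classical
  set FPf := (prodFlow Y Z).sub (fppSet Y Z ψ) hsub with hFPf
  set cφ : C(FPf.X, Y.X) :=
    ContinuousMap.mk (fun p => (Subtype.val p).1)
      (continuous_fst.comp continuous_subtype_val) with hcφ
  have hcφG : ∀ (g : G) (p : FPf.X), cφ (g • p) = g • cφ p := fun g p => rfl
  set cπ : ∀ i, C(FPf.X, (Z i).X) := fun i =>
    ContinuousMap.mk (fun p => (Subtype.val p).2 i)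
      ((continuous_apply i).comp (continuous_snd.comp continuous_subtype_val)) with hcπ
  have hcπG : ∀ i, ∀ (g : G) (p : FPf.X), cπ i (g • p) = g • cπ i p := fun i g p => rfl
  set cψ : ∀ i, C((Z i).X, Y.X) := fun i => ContinuousMap.mk (ψ i) (hψ i).1.1.1 with hcψ
  constructor
  · refine ⟨⟨cφ.continuous, hcφG⟩, ?_⟩
    intro y
    refine ⟨⟨(y, fun i => ((hψ i).1.2 y).choose), fun i => ((hψ i).1.2 y).choose_spec⟩, rfl⟩
  intro y μ hμ hsupp
  set Kcl := closure (stateOrbit FPf μ) with hKcl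
  set FS := {ν : C(FPf.X, ℝ) → ℝ |
      ν ∈ stateSet FPf.X ∧ ∃ y' : Y.X, SupportedOn FPf ν (cφ ⁻¹' {y'})} with hFS
  have hFSclosed : IsClosed FS := isClosed_fiberSupported FPf Y cφ
  -- finite stage claim
  have claim : ∀ s : Finset ι, ∃ ν, ν ∈ Kcl ∧ ν ∈ FS ∧
      ∀ i ∈ s, pushFn (cπ i) ν ∈ diracSet (Z i).X := by
    intro s
    induction s using Finset.induction_on with
    | empty =>
      refine ⟨μ, subset_closure (self_mem_stateOrbit FPf μ), ⟨hμ, y, ?_⟩, by simp⟩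
      exact hsupp
    | @insert a s ha ih =>
      obtain ⟨ν, hK, hFSν, hDir⟩ := ih
      obtain ⟨hνstate, y', hsupp'⟩ := hFSν
      set νa := pushFn (cπ a) ν with hνa
      have hνastate : νa ∈ stateSet (Z a).X := pushFn_mem_stateSet (cπ a) hνstate
      have hνasupp : SupportedOn (Z a) νa (ψ a ⁻¹' {y'}) := by
        refine supportedOn_pushFn (cπ a) (supportedOn_mono FPf ?_ hsupp')
        intro x hx
        have h1 : (Subtype.val x).1 = y' := hx
        have h2 : ψ a ((Subtype.val x).2 a) = (Subtype.val x).1 := x.2 a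
        show ψ a ((Subtype.val x).2 a) ∈ ({y'} : Set Y.X)
        rw [h2, h1]
        exact Set.mem_singleton _
      obtain ⟨zstar, hz⟩ := (hψ a).2 y' νa hνastate hνasupp
      have hrange : {ν' : C((Z a).X, ℝ) → ℝ | ∃ g : G, ν' = stateSMul (Z a) g νa} =
          Set.range fun g : G => stateSMul (Z a) g νa := by
        ext ν'; exact ⟨fun ⟨g, h⟩ => ⟨g, h.symm⟩, fun ⟨g, h⟩ => ⟨g, h.symm⟩⟩
      rw [hrange] at hz
      obtain ⟨𝒰, h𝒰⟩ := exists_ultrafilter_tendsto _ hz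
      obtain ⟨ν', hν'state, hTend⟩ := ultrafilter_limit_state 𝒰
        (ν := fun g : G => stateSMul FPf g ν)
        (Filter.Eventually.of_forall fun g => stateSMul_mem_stateSet FPf g hνstate)
      have hν'K : ν' ∈ Kcl := isClosed_closure.mem_of_tendsto hTend
        (Filter.Eventually.of_forall fun g => stateOrbit_subset_closure FPf hK ⟨g, rfl⟩)
      have hν'FS : ν' ∈ FS := hFSclosed.mem_of_tendsto hTend
        (Filter.Eventually.of_forall fun g => by
          refine ⟨stateSMul_mem_stateSet FPf g hνstate, g • y', ?_⟩
          refine supportedOn_mono FPf ?_ (supportedOn_stateSMul FPf g hsupp')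
          rintro - ⟨w, hw, rfl⟩
          show cφ (g • w) = g • y'
          rw [hcφG g w, show cφ w = y' from hw])
      refine ⟨ν', hν'K, hν'FS, ?_⟩
      intro i hi
      rcases Finset.mem_insert.1 hi with rfl | hi
      · have hcomp : (fun g : G => pushFn (cπ i) (stateSMul FPf g ν)) =
            fun g : G => stateSMul (Z i) g νa := by
          funext g
          rw [pushFn_stateSMul (cπ i) (hcπG i) g ν]
        have h1 : Filter.Tendsto (fun g : G => pushFn (cπ i) (stateSMul FPf g ν)) 𝒰
            (nhds (pushFn (cπ i) ν')) :=
          ((continuous_pushFn (cπ i)).tendsto ν').comp hTend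
        rw [hcomp] at h1
        have heq : pushFn (cπ i) ν' = diracState (Z i).X zstar :=
          tendsto_nhds_unique h1 h𝒰
        exact ⟨zstar, heq.symm⟩
      · obtain ⟨w, hw⟩ := hDir i hi
        have h1 : Filter.Tendsto (fun g : G => pushFn (cπ i) (stateSMul FPf g ν)) 𝒰
            (nhds (pushFn (cπ i) ν')) :=
          ((continuous_pushFn (cπ i)).tendsto ν').comp hTend
        refine isClosed_diracSet.mem_of_tendsto h1 (Filter.Eventually.of_forall fun g => ?_)
        rw [pushFn_stateSMul (cπ i) (hcπG i) g ν, ← hw, stateSMul_dirac]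
        exact ⟨g • w, rfl⟩
  -- pass to the limit over all coordinates
  have hKclbox : Kcl ⊆ stateBox FPf.X := by
    refine closure_minimal ?_ isCompact_stateBox.isClosed
    rintro - ⟨g, rfl⟩
    exact stateSet_subset_stateBox (stateSMul_mem_stateSet FPf g hμ)
  have hKFScompact : IsCompact (Kcl ∩ FS) :=
    isCompact_stateBox.of_isClosed_subset (isClosed_closure.inter hFSclosed)
      (fun ν hν => hKclbox hν.1)
  obtain ⟨ν, hν⟩ := hKFScompact.inter_iInter_nonempty
    (fun i => {ν : C(FPf.X, ℝ) → ℝ | pushFn (cπ i) ν ∈ diracSet (Z i).X})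
    (fun i => isClosed_diracSet.preimage (continuous_pushFn (cπ i)))
    (fun u => by
      obtain ⟨ν, h1, h2, h3⟩ := claim u
      exact ⟨ν, ⟨h1, h2⟩, Set.mem_iInter₂.2 fun i hi => h3 i hi⟩)
  obtain ⟨⟨hνK, hνstate, y', hsupp'⟩, hdir⟩ := hν
  have hdirall : ∀ i, pushFn (cπ i) ν ∈ diracSet (Z i).X := Set.mem_iInter.1 hdir
  choose w hw using hdirall
  have hw' : ∀ i, diracState (Z i).X (w i) = pushFn (cπ i) ν := hw
  -- the Y-marginal is Dirac at y'
  have hpushφ : pushFn cφ ν = diracState Y.X y' := by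
    refine state_supported_singleton Y (pushFn_mem_stateSet cφ hνstate) ?_
    exact supportedOn_pushFn cφ hsupp'
  -- hence (y', w) is in the fiber product
  have hmem : ∀ i, ψ i (w i) = y' := by
    intro i
    have h1 : pushFn (cψ i) (pushFn (cπ i) ν) = pushFn cφ ν := by
      funext f
      show ν ((f.comp (cψ i)).comp (cπ i)) = ν (f.comp cφ)
      congr 1
      ext x
      show f (ψ i ((Subtype.val x).2 i)) = f ((Subtype.val x).1)
      rw [x.2 i]
    have h2 : pushFn (cψ i) (diracState (Z i).X (w i)) = diracState Y.X y' := by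
      rw [hw' i, h1, hpushφ]
    rw [pushFn_dirac] at h2
    exact dirac_injective h2
  set p : FPf.X := ⟨(y', w), hmem⟩ with hp
  have hkey : ∀ h : C(FPf.X, ℝ), ν h ≤ h p := by
    intro h
    refine le_of_forall_pos_le_add fun ε hε => ?_
    set Fset : Set FPf.X := {x | h p + ε ≤ h x} with hFset
    have hFsetclosed : IsClosed Fset := isClosed_le continuous_const h.continuous
    set t' : Option ι → Set FPf.X := fun o =>
      Option.elim o (cφ ⁻¹' {y'}) (fun i => cπ i ⁻¹' {w i}) with ht'
    have ht'closed : ∀ o, IsClosed (t' o) := by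
      rintro (_ | i)
      · exact (isClosed_singleton).preimage cφ.continuous
      · exact (isClosed_singleton).preimage (cπ i).continuous
    have ht'supp : ∀ o, SupportedOn FPf ν (t' o) := by
      rintro (_ | i)
      · exact hsupp'
      · exact supportedOn_fiber_of_pushFn_dirac (cπ i) hνstate (hw' i).symm
    have hempty : Fset ∩ ⋂ o, t' o = ∅ := by
      rw [Set.eq_empty_iff_forall_notMem]
      rintro x ⟨hxF, hxI⟩
      have hx1 : (Subtype.val x).1 = y' := Set.mem_iInter.1 hxI none
      have hx2 : ∀ i, (Subtype.val x).2 i = w i := fun i => Set.mem_iInter.1 hxI (some i)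
      have hxp : x = p := by
        refine Subtype.ext (Prod.ext hx1 (funext hx2))
      rw [hxp] at hxF
      have : h p + ε ≤ h p := hxF
      linarith
    obtain ⟨u, hu⟩ := hFsetclosed.isCompact.elim_finite_subfamily_closed t' ht'closed hempty
    obtain ⟨hAsupp, -⟩ := supportedOn_biInter_finset FPf hνstate.1 ht'closed hνstate ht'supp u
    refine state_le_of_supported FPf hνstate hAsupp fun x hx => ?_
    by_contra hc
    push_neg at hc
    have : x ∈ Fset ∩ ⋂ o ∈ u, t' o := ⟨le_of_lt hc, hx⟩
    rw [hu] at this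
    exact this
  have hν_eq : ν = diracState FPf.X p := by
    funext h
    have h1 := hkey h
    have h2 := hkey (-h)
    have hneg : ν (-h) = -ν h := by
      have := state_map_sub hνstate.1 0 h
      simpa [hνstate.1.map_zero] using this
    rw [hneg, ContinuousMap.neg_apply] at h2
    have : h p ≤ ν h := by linarith
    exact le_antisymm h1 this
  exact ⟨p, hν_eq ▸ hνK⟩

end FiberProd
/-! ### Encoding strongly proximal extensions into a fixed carrier -/

section Encoding

variable {G : Type u} [Group G] [TopologicalSpace G] [IsTopologicalGroup G]

/-- Data describing a flow on a subset of the fixed carrier `ULift ((ℕ → ℝ) → ℝ)`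
together with a map to `Y`. -/
structure IdxData (G : Type u) [Group G] [TopologicalSpace G] [IsTopologicalGroup G]
    (Y : GFlow.{u, v} G) : Type (max u v) where
  A : Set (ULift.{max u v} ((ℕ → ℝ) → ℝ))
  ne : A.Nonempty
  cpt : IsCompact A
  act : G → A → A
  act_one : ∀ a, act 1 a = a
  act_mul : ∀ g h : G, ∀ a, act (g * h) a = act g (act h a)
  act_cont : Continuous fun p : G × A => act p.1 p.2
  ψm : A → Y.X

/-- The flow associated to an `IdxData`. -/
def IdxData.flow {Y : GFlow.{u, v} G} (d : IdxData G Y) : GFlow.{u, max u v} G :=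
  letI i1 : MulAction G d.A :=
    { smul := d.act, one_smul := d.act_one, mul_smul := d.act_mul }
  letI i2 : CompactSpace d.A := isCompact_iff_compactSpace.mp d.cpt
  haveI i3 : Nonempty d.A := d.ne.to_subtype
  letI i4 : ContinuousSMul G d.A := ⟨d.act_cont⟩
  GFlow.mk (X := d.A)

/-- Minimality transfers along surjective `G`-maps. -/
theorem isMinimal_of_surjective_gmap {F₁ : GFlow.{u, v} G} {F₂ : GFlow.{u, w} G}
    {h : F₁.X → F₂.X} (hmin : F₁.IsMinimal) (hG : IsGMap F₁ F₂ h)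
    (hsurj : Function.Surjective h) : F₂.IsMinimal := by
  intro C hC
  have hpre : IsSubflow F₁ (h ⁻¹' C) := by
    refine ⟨?_, hC.2.1.preimage hG.1, ?_⟩
    · obtain ⟨c, hc⟩ := hC.1
      obtain ⟨x, rfl⟩ := hsurj c
      exact ⟨x, hc⟩
    · intro g x hx
      show h (g • x) ∈ C
      rw [hG.2 g x]
      exact hC.2.2 g (h x) hx
  have := hmin _ hpre
  rw [Set.eq_univ_iff_forall]
  intro c
  obtain ⟨x, rfl⟩ := hsurj c
  exact (Set.eq_univ_iff_forall.1 this) x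

/-- Every minimal strongly proximal extension of `Y` by a flow in universe `max u v`
is isomorphic to one coming from an `IdxData`, provided `G` is separable. -/
theorem exists_idxData [TopologicalSpace.SeparableSpace G] (Y : GFlow.{u, v} G)
    (Z : GFlow.{u, max u v} G) (hmin : Z.IsMinimal) {ψZ : Z.X → Y.X}
    (hψ : IsStronglyProximalExt Z Y ψZ) :
    ∃ d : IdxData G Y, d.flow.IsMinimal ∧ IsStronglyProximalExt d.flow Y d.ψm ∧
      ∃ e : d.flow.X → Z.X, IsGMap d.flow Z e ∧ Function.Bijective e ∧
        ∀ x, ψZ (e x) = d.ψm x := by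
  classical
  -- separability of Z
  obtain ⟨D₀, hD₀count, hD₀dense⟩ := TopologicalSpace.exists_countable_dense G
  obtain ⟨z₀⟩ := (inferInstance : Nonempty Z.X)
  set DZ := (fun g : G => g • z₀) '' D₀ with hDZ
  have hmcont : Continuous fun g : G => g • z₀ := continuous_id.smul continuous_const
  have hDZdense : Dense DZ := by
    rw [dense_iff_closure_eq]
    refine Set.eq_univ_of_univ_subset ?_
    rw [← dense_orbit hmin z₀]
    refine closure_minimal ?_ isClosed_closure
    have h1 : Set.range (fun g : G => g • z₀) ⊆ closure DZ := by
      rintro - ⟨g, rfl⟩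
      have : g ∈ closure D₀ := by rw [hD₀dense.closure_eq]; trivial
      have h2 : (fun g : G => g • z₀) '' closure D₀ ⊆ closure DZ :=
        image_closure_subset_closure_image hmcont
      exact h2 ⟨g, this, rfl⟩
    exact h1
  have hDZcount : DZ.Countable := (hD₀count.image _)
  have hDZne : DZ.Nonempty := by
    obtain ⟨g, hg⟩ := hD₀dense.nonempty
    exact ⟨g • z₀, g, hg, rfl⟩
  haveI : Countable ↥DZ := hDZcount.to_subtype
  haveI : Nonempty ↥DZ := hDZne.to_subtype
  obtain ⟨uenum, hu⟩ := exists_surjective_nat ↥DZ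
  -- a surjection (ℕ → ℝ) → C(Z.X, ℝ)
  set R : C(Z.X, ℝ) → (ℕ → ℝ) := fun f n => f (uenum n) with hR
  have hRinj : Function.Injective R := by
    intro f₁ f₂ hf
    have : Set.EqOn (⇑f₁) (⇑f₂) DZ := by
      intro z hz
      obtain ⟨n, hn⟩ := hu ⟨z, hz⟩
      have := congrFun hf n
      rw [hR] at this
      simpa [hn] using this
    exact ContinuousMap.ext fun z =>
      congrFun (Continuous.ext_on hDZdense f₁.continuous f₂.continuous this) z
  haveI : Nonempty C(Z.X, ℝ) := ⟨0⟩
  set σ : (ℕ → ℝ) → C(Z.X, ℝ) := Function.invFun R with hσdef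
  have hσ : Function.Surjective σ := Function.invFun_surjective hRinj
  -- the embedding
  set e : Z.X → ULift.{max u v} ((ℕ → ℝ) → ℝ) := fun z => ULift.up (fun c => σ c z) with he
  have hecont : Continuous e :=
    (Homeomorph.ulift.symm.continuous).comp (continuous_pi fun c => (σ c).continuous)
  have heinj : Function.Injective e := by
    intro z₁ z₂ hz
    by_contra hne
    obtain ⟨f, hf0, hf1, -⟩ := exists_continuous_zero_one_of_isClosed
      (isClosed_singleton (x := z₁)) (isClosed_singleton (x := z₂))
      (by simpa [Set.disjoint_singleton] using hne)
    obtain ⟨c, hc⟩ := hσ f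
    have := congrFun (congrArg ULift.down hz) c
    simp only [he] at this
    rw [hc] at this
    rw [hf0 rfl, hf1 rfl] at this
    simpa using this
  -- the homeomorphism onto the range
  set A : Set (ULift.{max u v} ((ℕ → ℝ) → ℝ)) := Set.range e with hA
  have hcpt : IsCompact A := isCompact_range hecont
  set eqv : Z.X ≃ A := Equiv.ofInjective e heinj with heqv
  have heqvcont : Continuous eqv := Continuous.subtype_mk hecont _
  set hZA : Z.X ≃ₜ A := Continuous.homeoOfEquivCompactToT2 heqvcont with hZAdef
  have hZAsymm : ∀ z : Z.X, hZA.symm (hZA z) = z := fun z => hZA.symm_apply_apply z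
  have hZAapp : ∀ a : A, hZA (hZA.symm a) = a := fun a => hZA.apply_symm_apply a
  -- the data
  set d : IdxData G Y :=
    { A := A
      ne := Set.range_nonempty e
      cpt := hcpt
      act := fun g a => hZA (g • hZA.symm a)
      act_one := fun a => by show hZA (1 • hZA.symm a) = a; rw [one_smul, hZAapp]
      act_mul := fun g h a => by
        show hZA ((g * h) • hZA.symm a) = hZA (g • hZA.symm (hZA (h • hZA.symm a)))
        rw [mul_smul, hZAsymm (h • hZA.symm a)]
      act_cont := hZA.continuous.comp
        (continuous_fst.smul (hZA.symm.continuous.comp continuous_snd))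
      ψm := fun a => ψZ (hZA.symm a) } with hd
  set h1 : Z.X → d.flow.X := fun z => hZA z with hh1
  have hsmul : ∀ (g : G) (a : d.flow.X), g • a = hZA (g • hZA.symm a) := fun g a => rfl
  have hh1G : IsGMap Z d.flow h1 := by
    refine ⟨hZA.continuous, fun g z => ?_⟩
    rw [hsmul g (h1 z)]
    show hZA (g • z) = hZA (g • hZA.symm (hZA z))
    rw [hZAsymm]
  set e' : d.flow.X → Z.X := fun a => hZA.symm a with he'
  have he'G : IsGMap d.flow Z e' := by
    refine ⟨hZA.symm.continuous, fun g a => ?_⟩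
    rw [hsmul g a]
    show hZA.symm (hZA (g • hZA.symm a)) = g • hZA.symm a
    rw [hZAsymm]
  have hmin' : d.flow.IsMinimal := isMinimal_of_surjective_gmap hmin hh1G hZA.surjective
  have hψm : IsStronglyProximalExt d.flow Y d.ψm := by
    constructor
    · refine ⟨⟨hψ.1.1.1.comp hZA.symm.continuous, fun g a => ?_⟩, ?_⟩
      · show ψZ (e' (g • a)) = g • ψZ (e' a)
        rw [he'G.2 g a, hψ.1.1.2]
      · intro yy
        obtain ⟨z, hz⟩ := hψ.1.2 yy
        refine ⟨h1 z, ?_⟩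
        show ψZ (hZA.symm (hZA z)) = yy
        rw [hZAsymm]
        exact hz
    · intro yy μ hμ hsupp
      set cE : C(d.flow.X, Z.X) := ContinuousMap.mk e' hZA.symm.continuous with hcE
      set cH : C(Z.X, d.flow.X) := ContinuousMap.mk h1 hZA.continuous with hcH
      set μ₀ := pushFn cE μ with hμ₀
      have hμ₀state : μ₀ ∈ stateSet Z.X := pushFn_mem_stateSet cE hμ
      have hμ₀supp : SupportedOn Z μ₀ (ψZ ⁻¹' {yy}) := supportedOn_pushFn cE (by exact hsupp)
      obtain ⟨x, hx⟩ := hψ.2 yy μ₀ hμ₀state hμ₀supp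
      have hpush2 : pushFn cH μ₀ = μ := by
        funext f
        show μ ((f.comp cH).comp cE) = μ f
        congr 1
        ext a
        show f (hZA (hZA.symm a)) = f a
        exact congrArg f (hZAapp a)
      have hmem := pushFn_mem_closure_stateOrbit cH hh1G.2 (μ := μ₀)
        (ν := diracState Z.X x) hx
      rw [hpush2] at hmem
      exact ⟨cH x, hmem⟩
  exact ⟨d, hmin', hψm, e', he'G, hZA.symm.bijective, fun x => rfl⟩
/-- **Statement 8.** Every minimal flow of a Polish group admits a maximal strongly
proximal extension, unique up to isomorphism. -/
theorem statement8 {G : Type u} [Group G] [TopologicalSpace G] [IsTopologicalGroup G]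
    [PolishSpace G] (Y : GFlow.{u, v} G) (hY : Y.IsMinimal) :
    ∃ (X : GFlow.{u, max u v} G) (φ : X.X → Y.X),
      X.IsMinimal ∧ IsStronglyProximalExt X Y φ ∧
      (∀ (Z : GFlow.{u, max u v} G) (ψ : Z.X → Y.X), Z.IsMinimal →
        IsStronglyProximalExt Z Y ψ →
        ∃ π : X.X → Z.X, IsStronglyProximalExt X Z π ∧ ψ ∘ π = φ) ∧
      ∀ (X' : GFlow.{u, max u v} G) (φ' : X'.X → Y.X), X'.IsMinimal →
        IsStronglyProximalExt X' Y φ' →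
        (∀ (Z : GFlow.{u, max u v} G) (ψ : Z.X → Y.X), Z.IsMinimal →
          IsStronglyProximalExt Z Y ψ →
          ∃ π : X'.X → Z.X, IsStronglyProximalExt X' Z π ∧ ψ ∘ π = φ') →
        ∃ e : X.X → X'.X, IsGMap X X' e ∧ Function.Bijective e := by
  classical
  -- the index of all strongly proximal extensions over the fixed carrier
  set ι : Type (max u v) :=
    {d : IdxData G Y // d.flow.IsMinimal ∧ IsStronglyProximalExt d.flow Y d.ψm} with hι
  set Z : ι → GFlow.{u, max u v} G := fun i => i.1.flow with hZ
  set ψ : ∀ i : ι, (Z i).X → Y.X := fun i => i.1.ψm with hψdef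
  have hψ : ∀ i, IsStronglyProximalExt (Z i) Y (ψ i) := fun i => i.2.2
  have hsub : IsSubflow (prodFlow Y Z) (fppSet Y Z ψ) :=
    isSubflow_fppSet Y Z ψ (fun i => (hψ i).1.1.1) (fun i => (hψ i).1.1.2)
      (fun i => (hψ i).1.2)
  set FPf := (prodFlow Y Z).sub (fppSet Y Z ψ) hsub with hFPf
  have hSP : IsStronglyProximalExt FPf Y (fun p => (Subtype.val p).1) :=
    isStronglyProximalExt_fpp Y Z ψ hψ hsub
  -- take a minimal subflow
  obtain ⟨M, hMsub, hMmin⟩ := exists_minimal_subflow FPf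
  set XX := FPf.sub M hMsub with hXX
  have hXXmin : XX.IsMinimal := GFlow.sub_isMinimal FPf M hMsub hMmin
  set φ : XX.X → Y.X := fun m => (Subtype.val (Subtype.val m)).1 with hφ
  have hφGMap : IsGMap XX Y φ := by
    refine ⟨continuous_fst.comp ((continuous_subtype_val : Continuous (Subtype.val : FPf.X → (prodFlow Y Z).X)).comp (continuous_subtype_val : Continuous (Subtype.val : XX.X → FPf.X))),
      fun g m => rfl⟩
  have hφsurj : Function.Surjective φ := surjective_of_isGMap_minimal hφGMap hY
  have hφSP : IsStronglyProximalExt XX Y φ :=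
    isStronglyProximalExt_sub hSP M hMsub hφsurj
  -- universality
  have hU : ∀ (Z' : GFlow.{u, max u v} G) (ψ' : Z'.X → Y.X), Z'.IsMinimal →
      IsStronglyProximalExt Z' Y ψ' →
      ∃ π : XX.X → Z'.X, IsStronglyProximalExt XX Z' π ∧ ψ' ∘ π = φ := by
    intro Z' ψ' hZ'min hψ'
    obtain ⟨dd, hdmin, hdsp, e', he'G, he'bij, he'ψ⟩ := exists_idxData Y Z' hZ'min hψ'
    set i₀ : ι := ⟨dd, hdmin, hdsp⟩ with hi₀
    set π : XX.X → Z'.X := fun m => e' ((Subtype.val (Subtype.val m)).2 i₀) with hπ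
    have hπG : IsGMap XX Z' π := by
      refine ⟨he'G.1.comp ((continuous_apply i₀).comp
        (continuous_snd.comp ((continuous_subtype_val : Continuous (Subtype.val : FPf.X → (prodFlow Y Z).X)).comp (continuous_subtype_val : Continuous (Subtype.val : XX.X → FPf.X))))), ?_⟩
      intro g m
      show e' (g • (Subtype.val (Subtype.val m)).2 i₀) = g • π m
      rw [he'G.2]
    have hπsurj : Function.Surjective π := surjective_of_isGMap_minimal hπG hZ'min
    have hcomm : ψ' ∘ π = φ := by
      funext m
      show ψ' (e' ((Subtype.val (Subtype.val m)).2 i₀)) = (Subtype.val (Subtype.val m)).1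
      rw [he'ψ]
      exact (Subtype.val m).2 i₀
    refine ⟨π, ⟨⟨hπG, hπsurj⟩, ?_⟩, hcomm⟩
    intro z μ hμ hsupp
    have hsupp' : SupportedOn XX μ (φ ⁻¹' {ψ' z}) := by
      refine supportedOn_mono XX ?_ hsupp
      intro x hx
      show φ x ∈ ({ψ' z} : Set Y.X)
      have h1 : π x = z := hx
      have h2 : ψ' (π x) = φ x := congrFun hcomm x
      rw [← h2, h1]
      exact Set.mem_singleton _
    exact hφSP.2 (ψ' z) μ hμ hsupp'
  refine ⟨XX, φ, hXXmin, hφSP, hU, ?_⟩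
  -- uniqueness
  intro X' φ' hX'min hφ' huniv'
  obtain ⟨π, hπsp, hπcomm⟩ := hU X' φ' hX'min hφ'
  obtain ⟨π', hπ'sp, hπ'comm⟩ := huniv' XX φ hXXmin hφSP
  have hli : ∀ x, π' (π x) = x := by
    refine eq_id_of_gmap_over hXXmin hφSP
      (e := fun x => π' (π x)) ⟨hπ'sp.1.1.1.comp hπsp.1.1.1, fun g x => ?_⟩ (fun x => ?_)
    · show π' (π (g • x)) = g • π' (π x)
      rw [hπsp.1.1.2, hπ'sp.1.1.2]
    · have h1 : φ (π' (π x)) = φ' (π x) := congrFun hπ'comm (π x)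
      have h2 : φ' (π x) = φ x := congrFun hπcomm x
      rw [h1, h2]
  have hri : ∀ x, π (π' x) = x := by
    refine eq_id_of_gmap_over hX'min hφ'
      (e := fun x => π (π' x)) ⟨hπsp.1.1.1.comp hπ'sp.1.1.1, fun g x => ?_⟩ (fun x => ?_)
    · show π (π' (g • x)) = g • π (π' x)
      rw [hπ'sp.1.1.2, hπsp.1.1.2]
    · have h1 : φ' (π (π' x)) = φ (π' x) := congrFun hπcomm (π' x)
      have h2 : φ (π' x) = φ' x := congrFun hπ'comm x
      rw [h1, h2]
  refine ⟨π, hπsp.1.1, ?_, fun c => ⟨π' c, hri c⟩⟩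
  intro a b hab
  rw [← hli a, hab, hli b]
end Encoding
end Push
end

section
/- Let G be a topological group and let φ: L → K be an affine G-irreducible extension of affine G-flows. Then there exists a subset S ⊆ ext(L) with φ(S) = ext(K) and cardinality #S ≤ #ext(K), such that L equals the closed convex hull of G·S = {g·s : g ∈ G, s ∈ S}. Consequently, the cardinality of L is at most 2^(2^(𝔠 · #G · #K)), where 𝔠 is the cardinality of the continuum. -/
universe u v w x

/-- An affine `G`-flow `K` is affine `G`-projective if for all affine `G`-flows `L`, `P`,
every affine `G`-map `φ : K → L` and every affine extension `π : P → L`, there is an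
affine `G`-map `ψ : K → P` with `π ∘ ψ = φ` (on the carrier of `K`). -/
def IsAffineGProjective {G : Type u} [Group G] [TopologicalSpace G] [IsTopologicalGroup G]
    (K : AffineFlow.{u, v} G) : Prop :=
  ∀ (L : AffineFlow.{u, w} G) (P : AffineFlow.{u, x} G) (φ : K.E → L.E) (π : P.E → L.E),
    IsAffineGMap K L φ → IsAffineExtension P L π →
    ∃ ψ : K.E → P.E, IsAffineGMap K P ψ ∧ ∀ y ∈ K.carrier, π (ψ y) = φ y

section AuxLemmas



open Set Cardinal

lemma mk_closure_le_aux {X : Type u} [TopologicalSpace X] [T2Space X] (A : Set X) :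
    Cardinal.mk (closure A) ≤ 2 ^ ((2 : Cardinal.{u}) ^ Cardinal.mk A) := by
  have hinj : Function.Injective (fun x : closure A =>
      ({s : Set A | ∃ U : Set X, IsOpen U ∧ (x : X) ∈ U ∧ s = Subtype.val ⁻¹' U} :
        Set (Set A))) := by
    rintro ⟨x, hx⟩ ⟨y, hy⟩ h
    by_contra hne
    have hxy : x ≠ y := fun h' => hne (Subtype.ext h')
    obtain ⟨U, V, hU, hV, hxU, hyV, hUV⟩ := t2_separation hxy
    have h1 : (Subtype.val ⁻¹' U : Set A) ∈
        {s : Set A | ∃ W : Set X, IsOpen W ∧ x ∈ W ∧ s = Subtype.val ⁻¹' W} :=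
      ⟨U, hU, hxU, rfl⟩
    have h2 : (Subtype.val ⁻¹' U : Set A) ∈
        {s : Set A | ∃ W : Set X, IsOpen W ∧ y ∈ W ∧ s = Subtype.val ⁻¹' W} := by
      have h' : ({s : Set A | ∃ U : Set X, IsOpen U ∧ x ∈ U ∧ s = Subtype.val ⁻¹' U} :
          Set (Set A)) = {s : Set A | ∃ U : Set X, IsOpen U ∧ y ∈ U ∧ s = Subtype.val ⁻¹' U} := h
      exact h' ▸ h1
    obtain ⟨W, hW, hyW, hWU⟩ := h2
    have hnonempty : ((W ∩ V) ∩ A).Nonempty := by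
      rw [mem_closure_iff] at hy
      exact hy _ (hW.inter hV) ⟨hyW, hyV⟩
    obtain ⟨a, ⟨haW, haV⟩, haA⟩ := hnonempty
    have haU : (⟨a, haA⟩ : A) ∈ (Subtype.val ⁻¹' U : Set A) := by
      rw [hWU]; exact haW
    exact (Set.disjoint_left.mp hUV haU) haV
  calc Cardinal.mk (closure A) ≤ Cardinal.mk (Set (Set A)) := Cardinal.mk_le_of_injective hinj
    _ = 2 ^ ((2 : Cardinal.{u}) ^ Cardinal.mk A) := by rw [Cardinal.mk_set, Cardinal.mk_set]

lemma mk_convexHull_finset_le_aux {E : Type u} [AddCommGroup E] [Module ℝ E] (t : Finset E) :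
    Cardinal.mk (convexHull ℝ (↑t : Set E)) ≤ Cardinal.continuum := by
  classical
  have hcm : ∀ w₁ w₂ : E → ℝ, (∀ y ∈ t, w₁ y = w₂ y) →
      t.centerMass w₁ id = t.centerMass w₂ id := by
    intro w₁ w₂ h
    have hs1 : ∑ y ∈ t, w₁ y = ∑ y ∈ t, w₂ y := Finset.sum_congr rfl h
    have hs2 : ∑ y ∈ t, w₁ y • id y = ∑ y ∈ t, w₂ y • id y :=
      Finset.sum_congr rfl (fun y hy => by rw [h y hy])
    unfold Finset.centerMass
    rw [hs1, hs2]
  have hch : ∀ xv ∈ convexHull ℝ (↑t : Set E), ∃ w : E → ℝ,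
      (∀ y ∈ t, 0 ≤ w y) ∧ ∑ y ∈ t, w y = 1 ∧ t.centerMass w id = xv := by
    intro xv hxv
    rw [t.convexHull_eq] at hxv
    exact hxv
  choose w hw0 hw1 hwc using hch
  have hinj : Function.Injective
      (fun x : convexHull ℝ (↑t : Set E) => fun i : {y // y ∈ t} => w x.1 x.2 i.1) := by
    intro x x' hxx'
    have hagree : ∀ y ∈ t, w x.1 x.2 y = w x'.1 x'.2 y := fun y hy => congrFun hxx' ⟨y, hy⟩
    apply Subtype.ext
    rw [← hwc x.1 x.2, ← hwc x'.1 x'.2]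
    exact hcm _ _ hagree
  calc Cardinal.mk (convexHull ℝ (↑t : Set E))
      ≤ Cardinal.mk ({y // y ∈ t} → ℝ) := Cardinal.mk_le_of_injective hinj
    _ = Cardinal.continuum ^ Cardinal.mk {y // y ∈ t} := by
        rw [Cardinal.mk_arrow, Cardinal.mk_real, Cardinal.lift_continuum, Cardinal.lift_uzero]
    _ ≤ Cardinal.continuum ^ Cardinal.aleph0 :=
        Cardinal.power_le_power_left Cardinal.continuum_ne_zero
          (Cardinal.lt_aleph0_of_finite _).le
    _ = Cardinal.continuum := Cardinal.continuum_power_aleph0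

lemma mk_finset_subtype_le_aux {E : Type u} (A : Set E) :
    Cardinal.mk {t : Finset E // ↑t ⊆ A} ≤ max Cardinal.aleph0 (Cardinal.mk A) := by
  classical
  have hinj : Function.Injective (fun p : {t : Finset E // ↑t ⊆ A} =>
      (p.1.subtype (· ∈ A)).val.toList) := by
    intro p q hpq0
    have hpq : (p.1.subtype (· ∈ A)).val.toList = (q.1.subtype (· ∈ A)).val.toList := hpq0
    have h1 : (p.1.subtype (· ∈ A)) = (q.1.subtype (· ∈ A)) := by
      apply Finset.val_injective
      rw [← Multiset.coe_toList (p.1.subtype (· ∈ A)).val, hpq, Multiset.coe_toList]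
    have h2 : p.1 = q.1 := by
      have hp := Finset.subtype_map_of_mem (s := p.1) (p := (· ∈ A)) (fun x hx => p.2 hx)
      have hq := Finset.subtype_map_of_mem (s := q.1) (p := (· ∈ A)) (fun x hx => q.2 hx)
      rw [← hp, ← hq, h1]
    exact Subtype.ext h2
  calc Cardinal.mk {t : Finset E // ↑t ⊆ A}
      ≤ Cardinal.mk (List A) := Cardinal.mk_le_of_injective hinj
    _ ≤ max Cardinal.aleph0 (Cardinal.mk A) := Cardinal.mk_list_le_max _

lemma mk_convexHull_le_aux {E : Type u} [AddCommGroup E] [Module ℝ E] (A : Set E) :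
    Cardinal.mk (convexHull ℝ A) ≤
      max Cardinal.aleph0 (Cardinal.mk A) * Cardinal.continuum := by
  classical
  have hU : convexHull ℝ A = ⋃ p : {t : Finset E // ↑t ⊆ A}, convexHull ℝ (↑p.1 : Set E) := by
    rw [convexHull_eq_union_convexHull_finite_subsets A, Set.iUnion_subtype]
  haveI : Nonempty {t : Finset E // ↑t ⊆ A} := ⟨⟨∅, by simp⟩⟩
  calc Cardinal.mk (convexHull ℝ A)
      = Cardinal.mk (⋃ p : {t : Finset E // ↑t ⊆ A}, convexHull ℝ (↑p.1 : Set E)) := by rw [hU]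
    _ ≤ Cardinal.mk {t : Finset E // ↑t ⊆ A} *
        ⨆ p : {t : Finset E // ↑t ⊆ A}, Cardinal.mk (convexHull ℝ (↑p.1 : Set E)) :=
        Cardinal.mk_iUnion_le _
    _ ≤ max Cardinal.aleph0 (Cardinal.mk A) * Cardinal.continuum :=
        mul_le_mul' (mk_finset_subtype_le_aux A)
          (ciSup_le' fun p => mk_convexHull_finset_le_aux p.1)

end AuxLemmas

open Set Cardinal in
/-- **Statement 10.** If `φ : L → K` is an affine `G`-irreducible extension, then there is
`S ⊆ ext L` with `φ(S) = ext K`, `#S ≤ #ext K`, and `L = cl conv (G ⬝ S)`; consequently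
`#L ≤ 2 ^ 2 ^ (𝔠 ⬝ #G ⬝ #K)`. -/
theorem statement10 {G : Type u} [Group G] [TopologicalSpace G] [IsTopologicalGroup G]
    (L : AffineFlow.{u, u} G) (K : AffineFlow.{u, u} G) (f : L.E → K.E)
    (hf : IsAffineIrreducibleExt L K f) :
    (∃ S : Set L.E, S ⊆ L.carrier.extremePoints ℝ ∧
        f '' S = K.carrier.extremePoints ℝ ∧
        Cardinal.mk S ≤ Cardinal.mk (K.carrier.extremePoints ℝ) ∧
        L.carrier = closure (convexHull ℝ {x : L.E | ∃ g : G, ∃ s ∈ S, x = L.smul g s})) ∧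
      Cardinal.mk L.carrier ≤
        (2 : Cardinal.{u}) ^ ((2 : Cardinal.{u}) ^ (Cardinal.continuum * Cardinal.mk G * Cardinal.mk K.carrier)) := by
  classical
  obtain ⟨⟨⟨hmap, hcont, hequiv, haff⟩, hsurj⟩, hirr⟩ := hf
  have hKcl : IsClosed K.carrier := K.isCompact'.isClosed
  have hLcl : IsClosed L.carrier := L.isCompact'.isClosed
  -- Every extreme point of K lifts to an extreme point of L
  have key : ∀ y ∈ K.carrier.extremePoints ℝ,
      ∃ x, x ∈ L.carrier.extremePoints ℝ ∧ f x = y := by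
    intro y hy
    have hyK : y ∈ K.carrier := extremePoints_subset hy
    have hFcl : IsClosed (L.carrier ∩ f ⁻¹' {y}) :=
      hcont.preimage_isClosed_of_isClosed hLcl isClosed_singleton
    have hFsub : L.carrier ∩ f ⁻¹' {y} ⊆ L.carrier := Set.inter_subset_left
    have hFcomp : IsCompact (L.carrier ∩ f ⁻¹' {y}) :=
      L.isCompact'.of_isClosed_subset hFcl hFsub
    have hFne : (L.carrier ∩ f ⁻¹' {y}).Nonempty := by
      have hmem : y ∈ f '' L.carrier := hsurj ▸ hyK
      obtain ⟨x, hx, hfx⟩ := hmem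
      exact ⟨x, hx, hfx⟩
    obtain ⟨x, hx⟩ := hFcomp.extremePoints_nonempty hFne
    have hext : IsExtreme ℝ L.carrier (L.carrier ∩ f ⁻¹' {y}) := by
      refine ⟨hFsub, ?_⟩
      rintro x₁ hx₁ x₂ hx₂ z ⟨hzL, hzf⟩ ⟨a, b, ha, hb, hab, hz⟩
      have hb' : b = 1 - a := by linarith
      subst hb'
      have hfz : f z = y := hzf
      have hyseg : y ∈ openSegment ℝ (f x₁) (f x₂) := by
        refine ⟨a, 1 - a, ha, hb, by ring, ?_⟩
        rw [← haff x₁ hx₁ x₂ hx₂ a ha.le (by linarith), hz, hfz]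
      have he1 := hy.2 (hmap hx₁) (hmap hx₂) hyseg
      exact ⟨hx₁, he1⟩
    exact ⟨x, hext.extremePoints_subset_extremePoints hx,
      (extremePoints_subset hx).2⟩
  choose xe hxe hfxe using key
  set se : (K.carrier.extremePoints ℝ) → L.E := fun y => xe y.1 y.2 with hse
  set S : Set L.E := Set.range se with hSdef
  have hS1 : S ⊆ L.carrier.extremePoints ℝ := by
    rintro _ ⟨y, rfl⟩
    exact hxe y.1 y.2
  have hSL : S ⊆ L.carrier := fun z hz => extremePoints_subset (hS1 hz)
  have hS2 : f '' S = K.carrier.extremePoints ℝ := by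
    have hco : f ∘ se = fun y : (K.carrier.extremePoints ℝ) => (y : K.E) :=
      funext fun y => hfxe y.1 y.2
    rw [hSdef, ← Set.range_comp, hco, Subtype.range_coe]
  have hS3 : Cardinal.mk S ≤ Cardinal.mk (K.carrier.extremePoints ℝ) :=
    Cardinal.mk_range_le
  set GS : Set L.E := {x : L.E | ∃ g : G, ∃ s ∈ S, x = L.smul g s} with hGSdef
  have hGSsub : GS ⊆ L.carrier := by
    rintro x ⟨g, s', hs', rfl⟩
    exact L.smul_mem' g s' (hSL hs')
  have hSGS : S ⊆ GS := fun s' hs' => ⟨1, s', hs', (L.one_smul' s' (hSL hs')).symm⟩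
  have hconv : convexHull ℝ GS ⊆ L.carrier := convexHull_min hGSsub L.convex'
  set C : Set L.E := closure (convexHull ℝ GS) with hCdef
  have hCsub : C ⊆ L.carrier := closure_minimal hconv hLcl
  have hCconv : Convex ℝ C := (convex_convexHull ℝ GS).closure
  have hSC : S ⊆ C := fun z hz => subset_closure (subset_convexHull ℝ GS (hSGS hz))
  have hCne : C.Nonempty := by
    obtain ⟨y, hy⟩ := K.isCompact'.extremePoints_nonempty K.nonempty'
    exact ⟨se ⟨y, hy⟩, hSC ⟨⟨y, hy⟩, rfl⟩⟩
  have hsmulcont : ∀ g : G, ContinuousOn (L.smul g) L.carrier := by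
    intro g
    have hcc : ContinuousOn ((fun p : G × L.E => L.smul p.1 p.2) ∘ (fun x => (g, x)))
        L.carrier :=
      L.continuousOn_smul'.comp ((continuous_const.prodMk continuous_id).continuousOn)
        (fun x hx => Set.mem_prod.mpr ⟨Set.mem_univ g, hx⟩)
    exact hcc
  have hGSinv : ∀ g : G, ∀ x ∈ GS, L.smul g x ∈ GS := by
    rintro g x ⟨h, s', hs', rfl⟩
    exact ⟨g * h, s', hs', (L.mul_smul' g h s' (hSL hs')).symm⟩
  have hconvinv : ∀ g : G, ∀ x ∈ convexHull ℝ GS, L.smul g x ∈ convexHull ℝ GS := by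
    intro g
    have hT : convexHull ℝ GS ⊆
        {x | x ∈ convexHull ℝ GS ∧ L.smul g x ∈ convexHull ℝ GS} := by
      apply convexHull_min
      · intro x hx
        exact ⟨subset_convexHull ℝ GS hx, subset_convexHull ℝ GS (hGSinv g x hx)⟩
      · intro x hx y hy a b ha hb hab
        have hb' : b = 1 - a := by linarith
        subst hb'
        refine ⟨(convex_convexHull ℝ GS) hx.1 hy.1 ha hb hab, ?_⟩
        rw [L.smul_affine' g x (hconv hx.1) y (hconv hy.1) a ha (by linarith)]
        exact (convex_convexHull ℝ GS) hx.2 hy.2 ha hb hab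
    exact fun x hx => (hT hx).2
  have hCinv : ∀ g : G, ∀ x ∈ C, L.smul g x ∈ C := by
    intro g x hx
    have hc : ContinuousOn (L.smul g) (closure (convexHull ℝ GS)) :=
      (hsmulcont g).mono hCsub
    have himg := hc.image_closure
    have hsub2 : L.smul g '' convexHull ℝ GS ⊆ convexHull ℝ GS := by
      rintro _ ⟨z, hz, rfl⟩
      exact hconvinv g z hz
    exact closure_mono hsub2 (himg ⟨x, hx, rfl⟩)
  have hCflow : L.IsAffineSubflow C := ⟨hCne, hCsub, isClosed_closure, hCconv, hCinv⟩
  have hCcomp : IsCompact C := L.isCompact'.of_isClosed_subset isClosed_closure hCsub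
  have himgK : f '' C = K.carrier := by
    apply Set.Subset.antisymm
    · rintro _ ⟨x, hx, rfl⟩
      exact hmap (hCsub hx)
    · have h1 : IsCompact (f '' C) := hCcomp.image_of_continuousOn (hcont.mono hCsub)
      have h2 : Convex ℝ (f '' C) := by
        rintro _ ⟨x, hx, rfl⟩ _ ⟨y', hy', rfl⟩ a b ha hb hab
        have hb' : b = 1 - a := by linarith
        subst hb'
        exact ⟨a • x + (1 - a) • y', hCconv hx hy' ha hb hab,
          haff x (hCsub hx) y' (hCsub hy') a ha (by linarith)⟩
      have h3 : K.carrier.extremePoints ℝ ⊆ f '' C := by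
        rw [← hS2]
        exact Set.image_mono hSC
      calc K.carrier = closure (convexHull ℝ (K.carrier.extremePoints ℝ)) :=
            (closure_convexHull_extremePoints K.isCompact' K.convex').symm
        _ ⊆ f '' C := closure_minimal (convexHull_min h3 h2) h1.isClosed
  have hC : C = L.carrier := by
    by_contra hne
    exact hirr C hCflow hne himgK
  refine ⟨⟨S, hS1, hS2, hS3, hC.symm⟩, ?_⟩
  -- the cardinality bound
  have hone_le_G : (1 : Cardinal.{u}) ≤ Cardinal.mk G :=
    Cardinal.one_le_iff_ne_zero.mpr (Cardinal.mk_ne_zero G)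
  haveI : Nonempty K.carrier := K.nonempty'.to_subtype
  have hone_le_K : (1 : Cardinal.{u}) ≤ Cardinal.mk K.carrier :=
    Cardinal.one_le_iff_ne_zero.mpr (Cardinal.mk_ne_zero _)
  have h𝔠 : Cardinal.continuum ≤
      Cardinal.continuum * Cardinal.mk G * Cardinal.mk K.carrier :=
    (le_mul_of_one_le_right' hone_le_G).trans (le_mul_of_one_le_right' hone_le_K)
  have hGK : Cardinal.mk G * Cardinal.mk K.carrier ≤
      Cardinal.continuum * Cardinal.mk G * Cardinal.mk K.carrier := by
    rw [mul_assoc]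
    exact le_mul_of_one_le_left' (one_le_aleph0.trans Cardinal.aleph0_le_continuum)
  have hGScard : Cardinal.mk GS ≤ Cardinal.mk G * Cardinal.mk K.carrier := by
    have hsurj2 : Function.Surjective
        (fun p : G × S => (⟨L.smul p.1 p.2.1, p.1, p.2.1, p.2.2, rfl⟩ : GS)) := by
      rintro ⟨x, g, s', hs', rfl⟩
      exact ⟨⟨g, ⟨s', hs'⟩⟩, rfl⟩
    calc Cardinal.mk GS ≤ Cardinal.mk (G × S) := Cardinal.mk_le_of_surjective hsurj2
      _ = Cardinal.mk G * Cardinal.mk S := by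
          rw [Cardinal.mk_prod, Cardinal.lift_id, Cardinal.lift_id]
      _ ≤ Cardinal.mk G * Cardinal.mk K.carrier :=
          mul_le_mul' le_rfl (hS3.trans (Cardinal.mk_le_mk_of_subset extremePoints_subset))
  have hbound : Cardinal.mk (convexHull ℝ GS) ≤
      Cardinal.continuum * Cardinal.mk G * Cardinal.mk K.carrier := by
    calc Cardinal.mk (convexHull ℝ GS)
        ≤ max Cardinal.aleph0 (Cardinal.mk GS) * Cardinal.continuum :=
          mk_convexHull_le_aux GS
      _ ≤ max (max (max Cardinal.aleph0 (Cardinal.mk GS)) Cardinal.continuum)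
            Cardinal.aleph0 := Cardinal.mul_le_max _ _
      _ ≤ Cardinal.continuum * Cardinal.mk G * Cardinal.mk K.carrier := by
          refine max_le (max_le (max_le ?_ ?_) ?_) ?_
          · exact Cardinal.aleph0_le_continuum.trans h𝔠
          · exact hGScard.trans hGK
          · exact h𝔠
          · exact Cardinal.aleph0_le_continuum.trans h𝔠
  have hmkC : Cardinal.mk L.carrier = Cardinal.mk C := by rw [hC]
  rw [hmkC, hCdef]
  calc Cardinal.mk (closure (convexHull ℝ GS))
      ≤ 2 ^ ((2 : Cardinal.{u}) ^ Cardinal.mk (convexHull ℝ GS)) := mk_closure_le_aux _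
    _ ≤ (2 : Cardinal.{u}) ^ ((2 : Cardinal.{u}) ^
          (Cardinal.continuum * Cardinal.mk G * Cardinal.mk K.carrier)) :=
        Cardinal.power_le_power_left two_ne_zero
          (Cardinal.power_le_power_left two_ne_zero hbound)
end
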